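/- arXiv:1102.0552 — 6 statements merged into one kernel-verified Lean document; each statement's English description precedes it below -/
import Mathlib

section
/- Let G be a graph, ω an end of G, and S a set of exactly k vertices each of which dominates ω. Then G contains a subdivision of the complete graph K_k whose branching vertices are precisely the vertices of S. -/
open scoped ENNReal

namespace Paper

variable {V : Type*} {W : Type*}

/-- Reachability in `G` by a walk avoiding the vertex set `S`. -/
def ReachAvoid (G : SimpleGraph V) (S : Set V) (u v : V) : Prop :=
  ∃ p : G.Walk u v, ∀ x ∈ p.support, x ∉ S

/-- A ray (one-way infinite path) in `G`. -/
structure IsRay (G : SimpleGraph V) (f : ℕ → V) : Prop where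
  inj : Function.Injective f
  adj : ∀ n, G.Adj (f n) (f (n + 1))

/-- Two rays are equivalent (belong to the same end) if no finite vertex set
separates them: for every finite `S` some vertex of the first ray can be joined
to some vertex of the second by a walk avoiding `S`. -/
def EquivRay (G : SimpleGraph V) (f g : ℕ → V) : Prop :=
  ∀ S : Set V, S.Finite → ∃ m n, ReachAvoid G S (f m) (g n)

/-- The set of ends of `G`: rays modulo equivalence. -/
def Ends (G : SimpleGraph V) :=
  Quot (fun f g : {f : ℕ → V // IsRay G f} => EquivRay G f.1 g.1)

/-- `v` dominates the ray `f`: there are infinitely many `v`–`V(f)` paths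
pairwise disjoint except in `v`. -/
def DominatesRay (G : SimpleGraph V) (v : V) (f : ℕ → V) : Prop :=
  ∃ (g : ℕ → ℕ) (p : ∀ n, G.Walk v (f (g n))),
    Function.Injective g ∧ (∀ n, (p n).IsPath) ∧
    ∀ m n, m ≠ n → ∀ x ∈ (p m).support, x ∈ (p n).support → x = v

/-- The set of vertices dominating the end of the ray `r`. -/
def Dom (G : SimpleGraph V) (r : ℕ → V) : Set V := {v | DominatesRay G v r}

/-- Vertex-boundary of the vertex set `A`. -/
def vBoundary (G : SimpleGraph V) (A : Set V) : Set V :=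
  {x | x ∈ A ∧ ∃ y, y ∉ A ∧ G.Adj x y}

/-- Edge-boundary of the vertex set `A`. -/
def eBoundary (G : SimpleGraph V) (A : Set V) : Set (Sym2 V) :=
  {e | ∃ x y, x ∈ A ∧ y ∉ A ∧ G.Adj x y ∧ e = s(x, y)}

/-- `S` is a `V'`–`Ω(A)` separator: `V' ⊄ S` and no component of `G - S`
contains both a vertex of `V'` and (the tail of) a ray lying in `A`. -/
def SepVertsEndsIn (G : SimpleGraph V) (V' S A : Set V) : Prop :=
  ¬ V' ⊆ S ∧ ∀ v ∈ V', ∀ f : ℕ → V, IsRay G f → Set.range f ⊆ A →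
    ∀ n, (∀ m, n ≤ m → f m ∉ S) → ¬ ReachAvoid G S v (f n)

/-- `S` is an inclusion-minimal `V'`–`Ω(A)` separator. -/
def MinSepVertsEndsIn (G : SimpleGraph V) (V' S A : Set V) : Prop :=
  SepVertsEndsIn G V' S A ∧ ∀ S' ⊂ S, ¬ SepVertsEndsIn G V' S' A

/-- The graph `G_ω`: `G` minus the dominating vertices of the end of `r`. -/
def Gmin (G : SimpleGraph V) (r : ℕ → V) : SimpleGraph ((Dom G r)ᶜ : Set V) :=
  G.induce ((Dom G r)ᶜ : Set V)

/-- A ray of `G_ω` belonging to (the unique end `ω̂` induced by) the end `ω` of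
the ray `r`. -/
def InDeletedEnd (G : SimpleGraph V) (r : ℕ → V)
    (f : ℕ → ((Dom G r)ᶜ : Set V)) : Prop :=
  IsRay (Gmin G r) f ∧ EquivRay G (fun n => (f n : V)) r

/-- An `ω̂`-region of `G_ω`: induced connected, finite vertex-boundary,
containing a ray of `ω̂`. -/
def IsOmegaRegion (G : SimpleGraph V) (r : ℕ → V)
    (A : Set ((Dom G r)ᶜ : Set V)) : Prop :=
  ((Gmin G r).induce A).Connected ∧ (vBoundary (Gmin G r) A).Finite ∧
    ∃ f, InDeletedEnd G r f ∧ Set.range f ⊆ A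

/-- `(Ĥ_i) → ω̂` : a sequence of distinct nested `ω̂`-regions whose
vertex-boundaries are minimal separators. -/
def Converges (G : SimpleGraph V) (r : ℕ → V)
    (A : ℕ → Set ((Dom G r)ᶜ : Set V)) : Prop :=
  Function.Injective A ∧ (∀ i, IsOmegaRegion G r (A i)) ∧
    (∀ i, A (i + 1) ⊆ A i \ vBoundary (Gmin G r) (A i)) ∧
    (∀ i, MinSepVertsEndsIn (Gmin G r) (vBoundary (Gmin G r) (A i))
      (vBoundary (Gmin G r) (A (i + 1))) (A (i + 1)))

/-- The ratio `|∂_e A| / |∂_v A|`, as an extended nonnegative real. -/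
noncomputable def bratio (G : SimpleGraph V) (A : Set V) : ℝ≥0∞ :=
  ((eBoundary G A).encard : ℝ≥0∞) / ((vBoundary G A).encard : ℝ≥0∞)

open Classical in
/-- The relative degree `d_{e/v}` of the end of the ray `r`. -/
noncomputable def relDegree (G : SimpleGraph V) (r : ℕ → V) : ℝ≥0∞ :=
  if (Dom G r).Infinite ∨ ¬ ∃ f, InDeletedEnd G r f then
    ((Dom G r).encard : ℝ≥0∞)
  else
    ((Dom G r).encard : ℝ≥0∞) +
      ⨅ A : {A : ℕ → Set ((Dom G r)ᶜ : Set V) // Converges G r A},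
        Filter.atTop.liminf fun i => bratio (Gmin G r) (A.1 i)

/-- The degree of a vertex, as an extended real. -/
noncomputable def degER (G : SimpleGraph V) (v : V) : EReal :=
  (((G.neighborSet v).encard : ℝ≥0∞) : EReal)

/-- A subdivision of `K_k` in `G` with branching vertices `b 0, …, b (k-1)`. -/
def HasTKOn (G : SimpleGraph V) {k : ℕ} (b : Fin k ↪ V) : Prop :=
  ∃ p : ∀ i j : Fin k, G.Walk (b i) (b j),
    (∀ i j, i ≠ j → (p i j).IsPath) ∧
    (∀ i j, i ≠ j → ∀ x ∈ (p i j).support, x ∈ Set.range b → x = b i ∨ x = b j) ∧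
    (∀ i j i' j', i ≠ j → i' ≠ j' → s(i, j) ≠ s(i', j') →
      ∀ x ∈ (p i j).support, x ∈ (p i' j').support → x ∈ Set.range b)

/-- `K_k` is a topological minor of `G`. -/
def HasTopK (G : SimpleGraph V) (k : ℕ) : Prop :=
  ∃ b : Fin k ↪ V, HasTKOn G b

/-- A subdivision of `K_{ℵ₀}` in `G` with branching vertices `b 0, b 1, …`. -/
def HasTKInfOn (G : SimpleGraph V) (b : ℕ ↪ V) : Prop :=
  ∃ p : ∀ i j : ℕ, G.Walk (b i) (b j),
    (∀ i j, i ≠ j → (p i j).IsPath) ∧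
    (∀ i j, i ≠ j → ∀ x ∈ (p i j).support, x ∈ Set.range b → x = b i ∨ x = b j) ∧
    (∀ i j i' j', i ≠ j → i' ≠ j' → s(i, j) ≠ s(i', j') →
      ∀ x ∈ (p i j).support, x ∈ (p i' j').support → x ∈ Set.range b)

/-- `K_k` is a minor of `G` (with finite branch sets). -/
def HasKMinor (G : SimpleGraph V) (k : ℕ) : Prop :=
  ∃ B : Fin k → Finset V,
    (∀ i, (B i).Nonempty) ∧ (∀ i j, i ≠ j → Disjoint (B i) (B j)) ∧
    (∀ i, (G.induce (B i : Set V)).Connected) ∧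
    (∀ i j, i ≠ j → ∃ x ∈ B i, ∃ y ∈ B j, G.Adj x y)

/-- The average degree of the finite induced subgraph of `G` on `s`. -/
noncomputable def avgDegOn (G : SimpleGraph V) (s : Finset V) : ℝ :=
  (∑ v ∈ s, ((G.neighborSet v ∩ ↑s).ncard : ℝ)) / s.card

/-- `G` is rayless. -/
def Rayless (G : SimpleGraph V) : Prop := ¬ ∃ f : ℕ → V, IsRay G f

/-- The average degree of the vertex set `F` into `A` in `G`. -/
noncomputable def avgDegIn (G : SimpleGraph V) (A F : Set V) : ℝ :=
  (∑ᶠ v ∈ F, ((G.neighborSet v ∩ A).ncard : ℝ)) / F.ncard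


open SimpleGraph in
private lemma ray_seg (G : SimpleGraph V) (r : ℕ → V) (hr : IsRay G r)
    (a : ℕ) : ∀ c, a ≤ c → ∃ w : G.Walk (r a) (r c),
      ∀ x ∈ w.support, ∃ m, a ≤ m ∧ x = r m := by
  intro c hac
  induction c, hac using Nat.le_induction with
  | base =>
    refine ⟨Walk.nil, ?_⟩
    intro x hx
    simp only [Walk.support_nil, List.mem_singleton] at hx
    exact ⟨a, le_rfl, hx⟩
  | succ c hc ih =>
    obtain ⟨w, hw⟩ := ih
    refine ⟨w.concat (hr.adj c), ?_⟩
    intro x hx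
    rw [Walk.support_concat, List.mem_append,
      List.mem_singleton] at hx
    rcases hx with hx | hx
    · exact hw x hx
    · exact ⟨c + 1, by omega, hx⟩

open SimpleGraph in
private lemma ray_between (G : SimpleGraph V) (r : ℕ → V) (hr : IsRay G r)
    (N a c : ℕ) (ha : N < a) (hc : N < c) :
    ∃ w : G.Walk (r a) (r c), ∀ x ∈ w.support, ∃ m, N < m ∧ x = r m := by
  rcases le_total a c with h | h
  · obtain ⟨w, hw⟩ := ray_seg G r hr a c h
    refine ⟨w, fun x hx => ?_⟩
    obtain ⟨m, hm, hxm⟩ := hw x hx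
    exact ⟨m, by omega, hxm⟩
  · obtain ⟨w, hw⟩ := ray_seg G r hr c a h
    refine ⟨w.reverse, fun x hx => ?_⟩
    rw [Walk.support_reverse, List.mem_reverse] at hx
    obtain ⟨m, hm, hxm⟩ := hw x hx
    exact ⟨m, by omega, hxm⟩

open SimpleGraph in
/-- Key connection lemma: two vertices dominating the same ray can be joined
by a path avoiding any given finite set `X` not containing them. -/
private lemma connect (G : SimpleGraph V) (r : ℕ → V) (hr : IsRay G r)
    {u v : V} (hu : DominatesRay G u r) (hv : DominatesRay G v r)
    (X : Set V) (hX : X.Finite) (huX : u ∉ X) (hvX : v ∉ X) :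
    ∃ p : G.Walk u v, p.IsPath ∧ ∀ x ∈ p.support, x ∉ X := by
  classical
  obtain ⟨g, p, hg, hp, hd⟩ := hu
  obtain ⟨g', q, hg', hq, hd'⟩ := hv
  -- choose N beyond which the ray avoids X
  have hfin : {m | r m ∈ X}.Finite := hX.preimage hr.inj.injOn
  obtain ⟨N, hN⟩ := hfin.bddAbove
  have hNX : ∀ m, N < m → r m ∉ X := by
    intro m hm hmem
    exact absurd (hN hmem) (by omega)
  -- a good index for a fan of a dominating vertex
  have key : ∀ (w : V), w ∉ X → ∀ (g : ℕ → ℕ) (p : ∀ n, G.Walk w (r (g n))),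
      Function.Injective g →
      (∀ m n, m ≠ n → ∀ x ∈ (p m).support, x ∈ (p n).support → x = w) →
      ∃ n, N < g n ∧ ∀ x ∈ (p n).support, x ∉ X := by
    intro w hwX g p hg hd
    have hA : {n | ∃ x ∈ X, x ∈ (p n).support}.Finite := by
      have : {n | ∃ x ∈ X, x ∈ (p n).support} ⊆
          ⋃ x ∈ X, {n | x ∈ (p n).support} := by
        intro n hn
        obtain ⟨x, hx, hxn⟩ := hn
        exact Set.mem_biUnion hx hxn
      refine Set.Finite.subset (Set.Finite.biUnion hX fun x hx => ?_) this
      refine Set.Subsingleton.finite ?_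
      intro m hm n hn
      by_contra hmn
      exact hwX ((hd m n hmn x hm hn) ▸ hx)
    have hB : {n | g n ≤ N}.Finite := by
      have : {n | g n ≤ N} = g ⁻¹' Set.Iic N := rfl
      rw [this]
      exact (Set.finite_Iic N).preimage hg.injOn
    obtain ⟨n, hn⟩ := (hA.union hB).infinite_compl.nonempty
    rw [Set.mem_compl_iff, Set.mem_union, not_or] at hn
    refine ⟨n, by simpa using hn.2, fun x hx hxX => hn.1 ⟨x, hxX, hx⟩⟩
  obtain ⟨n₁, hn₁N, hn₁⟩ := key u huX g p hg hd
  obtain ⟨n₂, hn₂N, hn₂⟩ := key v hvX g' q hg' hd'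
  obtain ⟨w, hw⟩ := ray_between G r hr N (g n₁) (g' n₂) hn₁N hn₂N
  set W : G.Walk u v := (p n₁).append (w.append (q n₂).reverse) with hW
  have hWX : ∀ x ∈ W.support, x ∉ X := by
    intro x hx
    rw [hW, Walk.mem_support_append_iff, Walk.mem_support_append_iff,
      Walk.support_reverse, List.mem_reverse] at hx
    rcases hx with hx | hx | hx
    · exact hn₁ x hx
    · obtain ⟨m, hm, hxm⟩ := hw x hx
      exact hxm ▸ hNX m hm
    · exact hn₂ x hx
  exact ⟨W.toPath.1, W.toPath.2, fun x hx => hWX x (Walk.support_toPath_subset W hx)⟩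

open SimpleGraph in
private lemma build (G : SimpleGraph V) (r : ℕ → V) (hr : IsRay G r)
    (S : Finset V) (hdom : ∀ v ∈ S, DominatesRay G v r) (k : ℕ) (b : Fin k ↪ V)
    (hbS : ∀ i, b i ∈ S)
    (T : Finset {q : Fin k × Fin k // q.1 < q.2}) :
    ∃ P : ∀ q : {q : Fin k × Fin k // q.1 < q.2}, G.Walk (b q.1.1) (b q.1.2),
      (∀ q ∈ T, (P q).IsPath) ∧
      (∀ q ∈ T, ∀ x ∈ (P q).support, x ∈ S → x = b q.1.1 ∨ x = b q.1.2) ∧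
      (∀ q ∈ T, ∀ q' ∈ T, q ≠ q' → ∀ x ∈ (P q).support,
        x ∈ (P q').support → x ∈ (S : Set V)) := by
  classical
  induction T using Finset.induction with
  | empty =>
    refine ⟨fun q => (connect G r hr (hdom _ (hbS _)) (hdom _ (hbS _)) ∅
      Set.finite_empty (Set.notMem_empty _) (Set.notMem_empty _)).choose, ?_, ?_, ?_⟩ <;>
      simp
  | @insert q₀ T hq₀ ih =>
    obtain ⟨P, hP1, hP2, hP3⟩ := ih
    set u₀ := b q₀.1.1
    set v₀ := b q₀.1.2
    set X : Finset V := ((T.biUnion fun q => (P q).support.toFinset) ∪ S) \ {u₀, v₀}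
      with hXdef
    have huX : u₀ ∉ (X : Set V) := by
      simp [hXdef]
    have hvX : v₀ ∉ (X : Set V) := by
      simp [hXdef]
    obtain ⟨p₀, hp₀path, hp₀X⟩ := connect G r hr (hdom _ (hbS _)) (hdom _ (hbS _))
      (X : Set V) X.finite_toSet huX hvX
    refine ⟨Function.update P q₀ p₀, ?_, ?_, ?_⟩
    · intro q hq
      rcases Finset.mem_insert.1 hq with h | h
      · subst h; rw [Function.update_self]; exact hp₀path
      · rw [Function.update_of_ne (by rintro rfl; exact hq₀ h)]
        exact hP1 q h
    · intro q hq x hx hxS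
      rcases Finset.mem_insert.1 hq with h | h
      · subst h
        rw [Function.update_self] at hx
        by_contra hcon
        push_neg at hcon
        refine hp₀X x hx ?_
        simp only [hXdef, Finset.coe_sdiff, Set.mem_diff, Finset.coe_union,
          Set.mem_union, Finset.mem_coe, Finset.coe_insert]
        refine ⟨Or.inr hxS, ?_⟩
        simp only [Finset.coe_singleton, Set.mem_insert_iff, Set.mem_singleton_iff]
        tauto
      · rw [Function.update_of_ne (by rintro rfl; exact hq₀ h)] at hx
        exact hP2 q h x hx hxS
    · intro q hq q' hq' hqq' x hx hx'
      have main : ∀ q' ∈ T, x ∈ (p₀).support → x ∈ (P q').support → x ∈ (S : Set V) := by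
        intro q' hq'T hxp₀ hxP
        have hmem : x ∈ (T.biUnion fun q => (P q).support.toFinset) ∪ S := by
          refine Finset.mem_union_left _ ?_
          exact Finset.mem_biUnion.2 ⟨q', hq'T, List.mem_toFinset.2 hxP⟩
        by_cases hx12 : x = u₀ ∨ x = v₀
        · rcases hx12 with rfl | rfl
          · exact hbS _
          · exact hbS _
        · push_neg at hx12
          exact absurd (Finset.mem_coe.2 (Finset.mem_sdiff.2 ⟨hmem, by
            simp [hx12.1, hx12.2]⟩)) (hp₀X x hxp₀)
      rcases Finset.mem_insert.1 hq with h | h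
      · subst h
        rw [Function.update_self] at hx
        rcases Finset.mem_insert.1 hq' with h' | h'
        · exact absurd h'.symm hqq'
        · rw [Function.update_of_ne (by rintro rfl; exact hq₀ h')] at hx'
          exact main q' h' hx hx'
      · rcases Finset.mem_insert.1 hq' with h' | h'
        · subst h'
          rw [Function.update_self] at hx'
          rw [Function.update_of_ne (by rintro rfl; exact hq₀ h)] at hx
          exact main q h hx' hx
        · rw [Function.update_of_ne (by rintro rfl; exact hq₀ h)] at hx
          rw [Function.update_of_ne (by rintro rfl; exact hq₀ h')] at hx'
          exact hP3 q h q' h' hqq' x hx hx'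

/-- if `S` is a set of exactly `k` vertices dominating the end of
the ray `r`, then `G` contains a subdivision of `K_k` whose branching vertices
are precisely the vertices of `S`. -/
theorem tk_with_branch_vertices (G : SimpleGraph V) (r : ℕ → V) (hr : IsRay G r)
    (k : ℕ) (S : Finset V) (hcard : S.card = k)
    (hdom : ∀ v ∈ S, DominatesRay G v r) :
    ∃ b : Fin k ↪ V, Set.range b = (S : Set V) ∧ HasTKOn G b := by
  classical
  have e : S ≃ Fin k := S.equivFinOfCardEq hcard
  set b : Fin k ↪ V :=
    ⟨fun i => ((e.symm i : S) : V),
      fun i j h => e.symm.injective (Subtype.ext h)⟩ with hbdef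
  have hbS : ∀ i, b i ∈ S := fun i => (e.symm i).2
  have hrange : Set.range b = (S : Set V) := by
    ext x
    constructor
    · rintro ⟨i, rfl⟩; exact hbS i
    · intro hx
      exact ⟨e ⟨x, hx⟩, by show ((e.symm (e ⟨x, hx⟩) : S) : V) = x; simp⟩
  obtain ⟨P, h1, h2, h3⟩ := build G r hr S hdom k b hbS Finset.univ
  have h1 := fun q => h1 q (Finset.mem_univ q)
  have h2 := fun q => h2 q (Finset.mem_univ q)
  have h3 := fun q q' => h3 q (Finset.mem_univ q) q' (Finset.mem_univ q')
  refine ⟨b, hrange, ?_⟩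
  refine ⟨fun i j =>
    if h : i < j then P ⟨(i, j), h⟩
    else if h' : j < i then (P ⟨(j, i), h'⟩).reverse
    else (SimpleGraph.Walk.nil.copy rfl
      (congrArg b (le_antisymm (not_lt.1 h') (not_lt.1 h)))), ?_, ?_, ?_⟩
  · intro i j hij
    beta_reduce
    rcases hij.lt_or_gt with h | h
    · rw [dif_pos h]; exact h1 _
    · rw [dif_neg (asymm h), dif_pos h]
      exact (h1 _).reverse
  · intro i j hij x hx hxb
    beta_reduce at hx
    rw [hrange] at hxb
    rcases hij.lt_or_gt with h | h
    · rw [dif_pos h] at hx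
      exact h2 ⟨(i, j), h⟩ x hx hxb
    · rw [dif_neg (asymm h), dif_pos h, SimpleGraph.Walk.support_reverse,
        List.mem_reverse] at hx
      exact (h2 ⟨(j, i), h⟩ x hx hxb).symm
  · intro i j i' j' hij hij' hs x hx hx'
    beta_reduce at hx hx'
    have key : ∀ (a c : Fin k) (hac : a < c), x ∈ (
        if h : a < c then P ⟨(a, c), h⟩
        else if h' : c < a then (P ⟨(c, a), h'⟩).reverse
        else (SimpleGraph.Walk.nil.copy rfl
          (congrArg b (le_antisymm (not_lt.1 h') (not_lt.1 h))))).support ↔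
        x ∈ (P ⟨(a, c), hac⟩).support := by
      intro a c hac
      rw [dif_pos hac]
    -- normalize both walks to sorted pairs
    have norm : ∀ (a c : Fin k), a ≠ c → ∃ (a' c' : Fin k) (h : a' < c'),
        s(a, c) = s(a', c') ∧ (x ∈ (
        if h : a < c then P ⟨(a, c), h⟩
        else if h' : c < a then (P ⟨(c, a), h'⟩).reverse
        else (SimpleGraph.Walk.nil.copy rfl
          (congrArg b (le_antisymm (not_lt.1 h') (not_lt.1 h))))).support →
          x ∈ (P ⟨(a', c'), h⟩).support) := by
      intro a c hac
      rcases hac.lt_or_gt with h | h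
      · exact ⟨a, c, h, rfl, by rw [dif_pos h]; exact id⟩
      · refine ⟨c, a, h, Sym2.eq_swap, ?_⟩
        rw [dif_neg (asymm h), dif_pos h, SimpleGraph.Walk.support_reverse,
          List.mem_reverse]
        exact id
    obtain ⟨a, c, h, hsym, hmem⟩ := norm i j hij
    obtain ⟨a', c', h', hsym', hmem'⟩ := norm i' j' hij'
    have hqne : (⟨(a, c), h⟩ : {q : Fin k × Fin k // q.1 < q.2}) ≠ ⟨(a', c'), h'⟩ := by
      intro hcon
      apply hs
      rw [hsym, hsym']
      injection hcon with hcon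
      obtain ⟨rfl, rfl⟩ := Prod.mk.inj hcon; rfl
    rw [hrange]
    exact h3 _ _ hqne x (hmem hx) (hmem' hx')

end Paper
end

section
/- Let G be a graph and ω an end of G. If at least k vertices of G dominate ω, then G contains a subdivision of the complete graph K_k (i.e., K_k is a topological minor of G). -/
open scoped ENNReal

namespace Paper

variable {V : Type*} {W : Type*}

section Aux
variable {V : Type*}

/-- Walk along a ray. -/
def rayWalk {G : SimpleGraph V} {r : ℕ → V} (hr : IsRay G r) :
    ∀ (m len : ℕ), G.Walk (r m) (r (m + len))
  | _, 0 => SimpleGraph.Walk.nil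
  | m, (len+1) =>
      (SimpleGraph.Walk.cons (hr.adj m) (rayWalk hr (m+1) len)).copy rfl
        (congrArg r (by omega))

lemma mem_rayWalk_support {G : SimpleGraph V} {r : ℕ → V} (hr : IsRay G r)
    {m len : ℕ} {x : V} :
    x ∈ (rayWalk hr m len).support ↔ ∃ t, m ≤ t ∧ t ≤ m + len ∧ x = r t := by
  induction len generalizing m with
  | zero =>
    simp only [rayWalk, SimpleGraph.Walk.support_nil, List.mem_singleton]
    constructor
    · rintro rfl; exact ⟨m, le_refl _, by omega, rfl⟩
    · rintro ⟨t, h1, h2, rfl⟩; congr 1; omega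
  | succ n ih =>
    rw [rayWalk]
    simp only [SimpleGraph.Walk.support_copy, SimpleGraph.Walk.support_cons,
      List.mem_cons, ih]
    constructor
    · rintro (rfl | ⟨t, h1, h2, rfl⟩)
      · exact ⟨m, le_refl _, by omega, rfl⟩
      · exact ⟨t, by omega, by omega, rfl⟩
    · rintro ⟨t, h1, h2, rfl⟩
      rcases eq_or_lt_of_le h1 with h | h
      · exact Or.inl (congrArg r h.symm)
      · exact Or.inr ⟨t, by omega, by omega, rfl⟩

lemma rayWalk_isPath {G : SimpleGraph V} {r : ℕ → V} (hr : IsRay G r)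
    (m len : ℕ) : (rayWalk hr m len).IsPath := by
  induction len generalizing m with
  | zero => exact SimpleGraph.Walk.IsPath.nil
  | succ n ih =>
    rw [rayWalk, SimpleGraph.Walk.isPath_copy, SimpleGraph.Walk.cons_isPath_iff]
    refine ⟨ih (m+1), fun hmem => ?_⟩
    rw [mem_rayWalk_support hr] at hmem
    obtain ⟨t, h1, h2, het⟩ := hmem
    have := hr.inj het
    omega


open SimpleGraph Walk in
/-- Prefix of a walk up to the first vertex satisfying `P`, assuming the
endpoint satisfies `P`. -/
lemma splitAtFirst {G : SimpleGraph V} (P : V → Prop) :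
    ∀ {u v : V} (p : G.Walk u v), P v →
    ∃ (w : V) (q : G.Walk u w), P w ∧ (∀ x ∈ q.support, x ≠ w → ¬ P x) ∧
      (∀ x ∈ q.support, x ∈ p.support) ∧ (p.IsPath → q.IsPath) := by
  intro u v p
  induction p with
  | nil =>
    intro hv
    exact ⟨_, Walk.nil, hv, by simp, by simp, fun h => h⟩
  | @cons a b c hab p ih =>
    intro hv
    by_cases ha : P a
    · refine ⟨a, Walk.nil, ha, by simp, by simp, fun _ => IsPath.nil⟩
    · obtain ⟨w, q, hw, hnp, hsub, hpath⟩ := ih hv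
      refine ⟨w, Walk.cons hab q, hw, ?_, ?_, ?_⟩
      · intro x hx hxw
        rcases List.mem_cons.mp hx with rfl | hx
        · exact ha
        · exact hnp x hx hxw
      · intro x hx
        rcases List.mem_cons.mp hx with rfl | hx
        · exact Walk.start_mem_support _
        · exact List.mem_cons_of_mem _ (hsub x hx)
      · intro hp
        rw [Walk.cons_isPath_iff] at hp ⊢
        exact ⟨hpath hp.1, fun h => hp.2 (hsub a h)⟩

open SimpleGraph Walk in
/-- Appending two paths that share only the common endpoint gives a path. -/
lemma append_isPath {G : SimpleGraph V} {u v w : V} {p : G.Walk u v}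
    {q : G.Walk v w} (hp : p.IsPath) (hq : q.IsPath)
    (hd : ∀ x ∈ p.support, x ∈ q.support → x = v) :
    (p.append q).IsPath := by
  rw [Walk.isPath_def, Walk.support_append]
  apply List.Nodup.append (Walk.isPath_def _ |>.mp hp)
  · exact (Walk.isPath_def _ |>.mp hq).tail
  · intro x hxp hxq
    have hxq' : x ∈ q.support := by
      rw [Walk.support_eq_cons]; exact List.mem_cons_of_mem _ hxq
    have hxv : x = v := hd x hxp hxq'
    subst hxv
    have := Walk.isPath_def _ |>.mp hq
    rw [Walk.support_eq_cons] at this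
    exact (List.nodup_cons.mp this).1 hxq

/-- Choose a good index avoiding a finite vertex set and a finite index set. -/
lemma exists_good_path {G : SimpleGraph V} {v : V} {r : ℕ → V}
    {g : ℕ → ℕ} {p : ∀ n, G.Walk v (r (g n))}
    (_hginj : Function.Injective g) (_hpath : ∀ n, (p n).IsPath)
    (hdisj : ∀ m n, m ≠ n → ∀ x ∈ (p m).support, x ∈ (p n).support → x = v)
    {S : Set V} (hS : S.Finite) (hv : v ∉ S)
    {T : Set ℕ} (hT : T.Finite) :
    ∃ n, n ∉ T ∧ ∀ x ∈ (p n).support, x ∉ S := by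
  have hbad : {n : ℕ | ∃ x ∈ S, x ∈ (p n).support}.Finite := by
    have hsub : {n : ℕ | ∃ x ∈ S, x ∈ (p n).support} ⊆
        ⋃ x ∈ S, {n : ℕ | x ∈ (p n).support} := by
      rintro n ⟨x, hxS, hxp⟩
      exact Set.mem_biUnion hxS hxp
    refine Set.Finite.subset (Set.Finite.biUnion hS fun x hxS => ?_) hsub
    apply Set.Subsingleton.finite
    intro m hm n hn
    by_contra hmn
    exact hv (hdisj m n hmn x hm hn ▸ hxS)
  obtain ⟨n, hn⟩ := Set.Infinite.nonempty
    (Set.Finite.infinite_compl (hbad.union hT))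
  rw [Set.mem_compl_iff, Set.mem_union, not_or] at hn
  refine ⟨n, hn.2, fun x hx hxS => hn.1 ⟨x, hxS, hx⟩⟩

lemma exists_ray_bound {G : SimpleGraph V} {r : ℕ → V} (hr : IsRay G r)
    {S : Set V} (hS : S.Finite) : ∃ N, ∀ m, N ≤ m → r m ∉ S := by
  have hfin : {m : ℕ | r m ∈ S}.Finite :=
    Set.Finite.preimage (Set.injOn_of_injective hr.inj) hS
  obtain ⟨N, hN⟩ := hfin.bddAbove
  exact ⟨N + 1, fun m hm hmem => by have := hN hmem; omega⟩

/-- The key step: a path between two dominating vertices avoiding a finite set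
`F`, meeting `B` only in its endpoints, with all other vertices "fresh". -/
lemma step_path {G : SimpleGraph V} {r : ℕ → V} (hr : IsRay G r) {vI vJ : V}
    (hIJ : vI ≠ vJ) (hdomI : DominatesRay G vI r) (hdomJ : DominatesRay G vJ r)
    {B : Set V} (hB : B.Finite) (hvI : vI ∈ B) (hvJ : vJ ∈ B)
    {F : Set V} (hF : F.Finite) (hFB : ∀ x ∈ B, x ∉ F) :
    ∃ W : G.Walk vI vJ, W.IsPath ∧ (∀ x ∈ W.support, x ∈ B → x = vI ∨ x = vJ) ∧
      (∀ x ∈ W.support, x ∉ F) := by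
  classical
  obtain ⟨g, p, hg, hp, hdisj⟩ := hdomI
  obtain ⟨g', p', hg', hp', hdisj'⟩ := hdomJ
  obtain ⟨N, hN⟩ := exists_ray_bound hr (hF.union hB)
  set RL : Set V := r '' Set.Iio N with hRLdef
  have hRLfin : RL.Finite := (Set.finite_Iio N).image r
  have hSPfin : ((F ∪ B ∪ RL) \ {vI}).Finite := ((hF.union hB).union hRLfin).diff
  have hvISP : vI ∉ (F ∪ B ∪ RL) \ {vI} := fun h => h.2 rfl
  have hTfin : {n : ℕ | r (g n) = vI}.Finite := by
    apply Set.Subsingleton.finite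
    intro m hm n hn
    exact hg (hr.inj (hm.trans hn.symm))
  obtain ⟨n, hnT, hngood⟩ := exists_good_path hg hp hdisj hSPfin hvISP hTfin
  have hendP : r (g n) ∉ (F ∪ B ∪ RL) \ {vI} := hngood _ ((p n).end_mem_support)
  have haN0 : N ≤ g n := by
    by_contra h
    push_neg at h
    exact hendP ⟨Or.inr ⟨g n, h, rfl⟩, fun he => hnT he⟩
  obtain ⟨w, qP, hwP, hnpP, hsubP, hpathP0⟩ :=
    splitAtFirst (fun x => ∃ m, N ≤ m ∧ x = r m) (p n) ⟨g n, haN0, rfl⟩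
  obtain ⟨a, haN, rfl⟩ := hwP
  have hqPpath : qP.IsPath := hpathP0 (hp n)
  have hqPavoid : ∀ x ∈ qP.support, x ∉ (F ∪ B ∪ RL) \ {vI} :=
    fun x hx => hngood x (hsubP x hx)
  set QS : Set V := (F ∪ B ∪ RL ∪ {x | x ∈ qP.support}) \ {vJ} with hQSdef
  have hQSfin : QS.Finite :=
    (((hF.union hB).union hRLfin).union qP.support.finite_toSet).diff
  have hvJQS : vJ ∉ QS := fun h => h.2 rfl
  have hT'fin : {n : ℕ | r (g' n) = vJ}.Finite := by
    apply Set.Subsingleton.finite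
    intro m hm n hn
    exact hg' (hr.inj (hm.trans hn.symm))
  obtain ⟨n', hn'T, hn'good⟩ := exists_good_path hg' hp' hdisj' hQSfin hvJQS hT'fin
  have hendQ : r (g' n') ∉ QS := hn'good _ (p' n').end_mem_support
  have hcN0 : N ≤ g' n' := by
    by_contra h
    push_neg at h
    exact hendQ ⟨Or.inl (Or.inr ⟨g' n', h, rfl⟩), fun he => hn'T he⟩
  obtain ⟨w', qQ, hwQ, hnpQ, hsubQ, hpathQ0⟩ :=
    splitAtFirst (fun x => ∃ m, N ≤ m ∧ x = r m) (p' n') ⟨g' n', hcN0, rfl⟩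
  obtain ⟨c, hcN, rfl⟩ := hwQ
  have hqQpath : qQ.IsPath := hpathQ0 (hp' n')
  have hqQavoid : ∀ x ∈ qQ.support, x ∉ QS := fun x hx => hn'good x (hsubQ x hx)
  have hrac : a ≠ c := by
    intro h
    subst h
    apply hqQavoid _ qQ.end_mem_support
    refine ⟨Or.inr qP.end_mem_support, fun he => ?_⟩
    have hBa : r a ∈ B := by rw [show r a = vJ from he]; exact hvJ
    exact hN a haN (Or.inr hBa)
  have hseg : ∃ segW : G.Walk (r a) (r c), segW.IsPath ∧
      ∀ x ∈ segW.support, ∃ m, N ≤ m ∧ x = r m := by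
    rcases lt_or_gt_of_ne hrac with h | h
    · refine ⟨(rayWalk hr a (c - a)).copy rfl (congrArg r (by omega)), ?_, ?_⟩
      · rw [SimpleGraph.Walk.isPath_copy]
        exact rayWalk_isPath hr a (c - a)
      · intro x hx
        rw [SimpleGraph.Walk.support_copy, mem_rayWalk_support hr] at hx
        obtain ⟨t, h1, _, rfl⟩ := hx
        exact ⟨t, by omega, rfl⟩
    · refine ⟨((rayWalk hr c (a - c)).copy rfl (congrArg r (by omega))).reverse,
        ?_, ?_⟩
      · rw [SimpleGraph.Walk.isPath_reverse_iff, SimpleGraph.Walk.isPath_copy]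
        exact rayWalk_isPath hr c (a - c)
      · intro x hx
        rw [SimpleGraph.Walk.support_reverse, List.mem_reverse,
          SimpleGraph.Walk.support_copy, mem_rayWalk_support hr] at hx
        obtain ⟨t, h1, _, rfl⟩ := hx
        exact ⟨t, by omega, rfl⟩
  obtain ⟨segW, hsegPath, hsegMem⟩ := hseg
  have hPQ : ∀ x ∈ qP.support, x ∉ qQ.support := by
    intro x hxP hxQ
    apply hqQavoid x hxQ
    refine ⟨Or.inr hxP, fun he => ?_⟩
    apply hqPavoid x hxP
    refine ⟨Or.inl (Or.inr (by rw [show x = vJ from he]; exact hvJ)), fun he2 => ?_⟩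
    exact hIJ (by rw [← show x = vI from he2, show x = vJ from he])
  have hinner : (segW.append qQ.reverse).IsPath := by
    apply append_isPath hsegPath hqQpath.reverse
    intro x hxs hxq
    rw [SimpleGraph.Walk.support_reverse, List.mem_reverse] at hxq
    obtain ⟨m, hm, rfl⟩ := hsegMem x hxs
    by_contra hne
    exact hnpQ _ hxq hne ⟨m, hm, rfl⟩
  have houter : (qP.append (segW.append qQ.reverse)).IsPath := by
    apply append_isPath hqPpath hinner
    intro x hxP hxI
    rw [SimpleGraph.Walk.mem_support_append_iff] at hxI
    rcases hxI with hxs | hxq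
    · obtain ⟨m, hm, rfl⟩ := hsegMem x hxs
      by_contra hne
      exact hnpP _ hxP hne ⟨m, hm, rfl⟩
    · rw [SimpleGraph.Walk.support_reverse, List.mem_reverse] at hxq
      exact absurd hxq (hPQ x hxP)
  refine ⟨qP.append (segW.append qQ.reverse), houter, ?_, ?_⟩
  · intro x hx hxB
    rw [SimpleGraph.Walk.mem_support_append_iff,
      SimpleGraph.Walk.mem_support_append_iff] at hx
    rcases hx with hxP | hxs | hxq
    · left
      by_contra hne
      exact hqPavoid x hxP ⟨Or.inl (Or.inr hxB), fun he => hne he⟩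
    · obtain ⟨m, hm, rfl⟩ := hsegMem x hxs
      exact absurd (Or.inr hxB) (hN m hm)
    · right
      rw [SimpleGraph.Walk.support_reverse, List.mem_reverse] at hxq
      by_contra hne
      exact hqQavoid x hxq ⟨Or.inl (Or.inl (Or.inr hxB)), fun he => hne he⟩
  · intro x hx hxF
    rw [SimpleGraph.Walk.mem_support_append_iff,
      SimpleGraph.Walk.mem_support_append_iff] at hx
    rcases hx with hxP | hxs | hxq
    · exact hqPavoid x hxP ⟨Or.inl (Or.inl hxF),
        fun he => hFB vI hvI (by rwa [show x = vI from he] at hxF)⟩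
    · obtain ⟨m, hm, rfl⟩ := hsegMem x hxs
      exact hN m hm (Or.inl hxF)
    · rw [SimpleGraph.Walk.support_reverse, List.mem_reverse] at hxq
      exact hqQavoid x hxq ⟨Or.inl (Or.inl (Or.inl hxF)),
        fun he => hFB vJ hvJ (by rwa [show x = vJ from he] at hxF)⟩


lemma build_walks {G : SimpleGraph V} {r : ℕ → V} (hr : IsRay G r) {k : ℕ}
    (b : Fin k ↪ V) (hb : ∀ i, DominatesRay G (b i) r) :
    ∀ (L : List (Fin k × Fin k)) (F : Set V), F.Finite → (∀ i, b i ∉ F) →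
    (∀ q ∈ L, q.1 ≠ q.2) →
    ∃ Wf : ∀ q ∈ L, G.Walk (b q.1) (b q.2),
      (∀ q hq, (Wf q hq).IsPath) ∧
      (∀ q hq, ∀ x ∈ (Wf q hq).support, x ∈ Set.range b →
        x = b q.1 ∨ x = b q.2) ∧
      (∀ q hq, ∀ x ∈ (Wf q hq).support, x ∉ F) ∧
      (∀ q hq q' hq', q ≠ q' → ∀ x ∈ (Wf q hq).support,
        x ∈ (Wf q' hq').support → x ∈ Set.range b) := by
  classical
  intro L
  induction L with
  | nil =>
    intro F _ _ _
    exact ⟨fun q hq => absurd hq (List.not_mem_nil), fun q hq => absurd hq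
      (List.not_mem_nil), fun q hq => absurd hq (List.not_mem_nil),
      fun q hq => absurd hq (List.not_mem_nil),
      fun q hq => absurd hq (List.not_mem_nil)⟩
  | cons q0 L ih =>
    intro F hF hbF hne
    have hq0 : q0.1 ≠ q0.2 := hne q0 (List.mem_cons_self)
    have hIJ : b q0.1 ≠ b q0.2 := fun h => hq0 (b.injective h)
    obtain ⟨W0, hW0path, hW0B, hW0F⟩ := step_path hr hIJ (hb q0.1) (hb q0.2)
      (Set.finite_range b) ⟨q0.1, rfl⟩ ⟨q0.2, rfl⟩ hF
      (fun x hx => by obtain ⟨i, rfl⟩ := hx; exact hbF i)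
    set F' : Set V := F ∪ {x | x ∈ W0.support ∧ x ∉ Set.range b} with hF'def
    have hF'fin : F'.Finite :=
      hF.union (W0.support.finite_toSet.subset (fun x hx => hx.1))
    have hbF' : ∀ i, b i ∉ F' := by
      rintro i (h | h)
      · exact hbF i h
      · exact h.2 ⟨i, rfl⟩
    obtain ⟨WfT, h1, h2, h3, h4⟩ := ih F' hF'fin hbF'
      (fun q hq => hne q (List.mem_cons_of_mem _ hq))
    refine ⟨fun q hq => if h : q = q0 then h.symm ▸ W0
      else WfT q ((List.mem_cons.mp hq).resolve_left h), ?_, ?_, ?_, ?_⟩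
    · intro q hq
      by_cases h : q = q0
      · subst h
        simpa using hW0path
      · simpa [h] using h1 q ((List.mem_cons.mp hq).resolve_left h)
    · intro q hq x hx hxr
      by_cases h : q = q0
      · subst h
        simp only [dif_pos] at hx
        exact hW0B x hx hxr
      · simp only [dif_neg h] at hx
        exact h2 q _ x hx hxr
    · intro q hq x hx
      by_cases h : q = q0
      · subst h
        simp only [dif_pos] at hx
        exact hW0F x hx
      · simp only [dif_neg h] at hx
        intro hxF
        exact h3 q _ x hx (Or.inl hxF)
    · intro q hq q' hq' hqq' x hx hx'
      by_cases h : q = q0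
      · subst h
        simp only [dif_pos] at hx
        have h' : q' ≠ q := fun he => hqq' he.symm
        simp only [dif_neg h'] at hx'
        by_contra hxr
        exact h3 q' _ x hx' (Or.inr ⟨hx, hxr⟩)
      · simp only [dif_neg h] at hx
        by_cases h' : q' = q0
        · subst h'
          simp only [dif_pos] at hx'
          by_contra hxr
          exact h3 q _ x hx (Or.inr ⟨hx', hxr⟩)
        · simp only [dif_neg h'] at hx'
          exact h4 q _ q' _ hqq' x hx hx'

end Aux

/-- if at least `k` vertices dominate the end of the ray `r`,
then `K_k` is a topological minor of `G`. -/
theorem topK_of_many_dominating (G : SimpleGraph V) (r : ℕ → V) (hr : IsRay G r)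
    (k : ℕ) (hk : (k : ℕ∞) ≤ (Dom G r).encard) : HasTopK G k := by
  classical
  obtain ⟨t, hts, htk⟩ := Set.exists_subset_encard_eq hk
  have htf : t.Finite := Set.finite_of_encard_eq_coe htk
  have hcard : htf.toFinset.card = k := by
    have := htf.encard_eq_coe_toFinset_card
    rw [htk] at this
    exact_mod_cast this.symm
  let e : htf.toFinset ≃ Fin k := htf.toFinset.equivFinOfCardEq hcard
  let b : Fin k ↪ V := e.symm.toEmbedding.trans (Function.Embedding.subtype _)
  have hb : ∀ i, DominatesRay G (b i) r := by
    intro i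
    have : (b i : V) ∈ t := by
      have := (e.symm i).2
      rwa [Set.Finite.mem_toFinset] at this
    exact hts this
  set L : List (Fin k × Fin k) :=
    (List.finRange k ×ˢ List.finRange k).filter (fun q => q.1 ≠ q.2) with hLdef
  have hmemL : ∀ i j : Fin k, i ≠ j → (i, j) ∈ L := by
    intro i j hij
    simp [hLdef, List.mem_filter, List.pair_mem_product, List.mem_finRange, hij]
  have hneL : ∀ q ∈ L, q.1 ≠ q.2 := by
    intro q hq
    simp only [hLdef, List.mem_filter, decide_not] at hq
    simpa using hq.2
  obtain ⟨Wf, h1, h2, h3, h4⟩ := build_walks hr b hb L ∅ Set.finite_empty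
    (fun _ h => h) hneL
  refine ⟨b, fun i j => if h : i = j then
      (SimpleGraph.Walk.nil.copy rfl (congrArg b h)) else Wf (i, j) (hmemL i j h),
    ?_, ?_, ?_⟩
  · intro i j hij
    simpa [dif_neg hij] using h1 (i, j) (hmemL i j hij)
  · intro i j hij x hx hxr
    simp only [dif_neg hij] at hx
    exact h2 (i, j) (hmemL i j hij) x hx hxr
  · intro i j i' j' hij hij' hs x hx hx'
    simp only [dif_neg hij] at hx
    simp only [dif_neg hij'] at hx'
    have hqq : (i, j) ≠ (i', j') := by
      rintro h
      rw [Prod.mk.injEq] at h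
      exact hs (by rw [h.1, h.2])
    exact h4 (i, j) (hmemL i j hij) (i', j') (hmemL i' j' hij') hqq x hx hx'

end Paper
end

section
/- Let G be a graph, ω an end of G dominated by only finitely many vertices, and let G_ω = G − Dom(ω) where Dom(ω) is the set of vertices dominating ω. If G_ω contains a ray of ω, then there is exactly one end of G_ω containing rays of ω. -/
open scoped ENNReal

namespace Paper

variable {V : Type*} {W : Type*}

/-- Walk along a ray from index `k` to index `k + d`. -/
lemma ray_walk_exists {G : SimpleGraph V} {r : ℕ → V} (hr : IsRay G r)
    (k d : ℕ) : ∃ w : G.Walk (r k) (r (k + d)),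
      ∀ x ∈ w.support, ∃ i, k ≤ i ∧ i ≤ k + d ∧ x = r i := by
  induction d with
  | zero => exact ⟨SimpleGraph.Walk.nil, by
      intro x hx
      simp only [SimpleGraph.Walk.support_nil, List.mem_singleton] at hx
      exact ⟨k, le_refl k, le_refl _, hx⟩⟩
  | succ d ih =>
      obtain ⟨w, hw⟩ := ih
      refine ⟨w.concat (by rw [← Nat.add_assoc]; exact hr.adj (k + d)), ?_⟩
      intro x hx
      simp only [SimpleGraph.Walk.support_concat, List.concat_eq_append,
        List.mem_append, List.mem_singleton] at hx
      rcases hx with hx | hx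
      · obtain ⟨i, h1, h2, h3⟩ := hw x hx
        exact ⟨i, h1, h2.trans (Nat.le_succ _), h3⟩
      · refine ⟨k + d + 1, by omega, by omega, ?_⟩
        rw [hx, Nat.add_assoc]

/-- Walk along a ray between any two indices. -/
lemma ray_walk_between {G : SimpleGraph V} {r : ℕ → V} (hr : IsRay G r)
    (k k' : ℕ) : ∃ w : G.Walk (r k) (r k'),
      ∀ x ∈ w.support, ∃ i, min k k' ≤ i ∧ x = r i := by
  rcases le_total k k' with h | h
  · obtain ⟨w, hw⟩ := ray_walk_exists hr k (k' - k)
    have hk : k + (k' - k) = k' := by omega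
    refine ⟨w.copy rfl (congrArg r hk), ?_⟩
    intro x hx
    rw [SimpleGraph.Walk.support_copy] at hx
    obtain ⟨i, h1, _, h3⟩ := hw x hx
    exact ⟨i, le_trans (min_le_left _ _) h1, h3⟩
  · obtain ⟨w, hw⟩ := ray_walk_exists hr k' (k - k')
    have hk : k' + (k - k') = k := by omega
    refine ⟨(w.copy rfl (congrArg r hk)).reverse, ?_⟩
    intro x hx
    rw [SimpleGraph.Walk.support_reverse, List.mem_reverse,
      SimpleGraph.Walk.support_copy] at hx
    obtain ⟨i, h1, _, h3⟩ := hw x hx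
    exact ⟨i, le_trans (min_le_right _ _) h1, h3⟩

/-- Lift a walk whose support lies in `A` to the induced subgraph on `A`. -/
lemma lift_walk_induce {G : SimpleGraph V} {A : Set V} :
    ∀ {u v : V} (p : G.Walk u v) (hp : ∀ x ∈ p.support, x ∈ A),
    ∃ q : (G.induce A).Walk ⟨u, hp u p.start_mem_support⟩
        ⟨v, hp v p.end_mem_support⟩,
      ∀ x ∈ q.support, (x : V) ∈ p.support := by
  intro u v p
  induction p with
  | nil =>
      intro hp
      exact ⟨SimpleGraph.Walk.nil, by
        intro x hx
        simp only [SimpleGraph.Walk.support_nil, List.mem_singleton] at hx ⊢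
        rw [hx]⟩
  | @cons a b c hab p ih =>
      intro hp
      have hb : ∀ x ∈ p.support, x ∈ A := fun x hx =>
        hp x (by rw [SimpleGraph.Walk.support_cons]; exact List.mem_cons_of_mem _ hx)
      obtain ⟨q, hq⟩ := ih hb
      have hadj : (G.induce A).Adj ⟨a, hp a (SimpleGraph.Walk.start_mem_support _)⟩
          ⟨b, hb b p.start_mem_support⟩ := hab
      refine ⟨SimpleGraph.Walk.cons hadj q, ?_⟩
      intro x hx
      rw [SimpleGraph.Walk.support_cons, List.mem_cons] at hx
      rw [SimpleGraph.Walk.support_cons, List.mem_cons]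
      rcases hx with hx | hx
      · left; rw [hx]
      · right; exact hq x hx

/-- if `Dom(ω)` is finite and `G_ω = G - Dom(ω)` contains rays of
`ω`, then all such rays belong to the same end of `G_ω`; i.e. there is exactly
one end of `G_ω` containing rays of `ω`. -/
theorem unique_end_in_deleted (G : SimpleGraph V) (r : ℕ → V) (hr : IsRay G r)
    (hfin : (Dom G r).Finite)
    (f g : ℕ → ((Dom G r)ᶜ : Set V))
    (hf : InDeletedEnd G r f) (hg : InDeletedEnd G r g) :
    EquivRay (Gmin G r) f g := by
  intro S hS
  -- the finite set in `G` to avoid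
  set T : Set V := (Subtype.val '' S) ∪ Dom G r with hT
  have hTfin : T.Finite := (hS.image _).union hfin
  -- indices where the ray meets `T`
  have hIfin : {i : ℕ | r i ∈ T}.Finite :=
    Set.Finite.preimage hr.inj.injOn hTfin
  obtain ⟨N, hN⟩ := hIfin.bddAbove
  -- the enlarged set
  set T' : Set V := T ∪ (r '' {i | i ≤ N}) with hT'
  have hT'fin : T'.Finite := hTfin.union ((Set.finite_Iic N).image r)
  obtain ⟨m, k, p, hp⟩ := hf.2 T' hT'fin
  obtain ⟨n, k', q, hq⟩ := hg.2 T' hT'fin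
  have hkN : N < k := by
    by_contra h
    exact hp (r k) p.end_mem_support
      (Or.inr ⟨k, by simp only [Set.mem_setOf_eq]; omega, rfl⟩)
  have hk'N : N < k' := by
    by_contra h
    exact hq (r k') q.end_mem_support
      (Or.inr ⟨k', by simp only [Set.mem_setOf_eq]; omega, rfl⟩)
  obtain ⟨w, hw⟩ := ray_walk_between hr k k'
  -- the combined walk in `G`
  set W : G.Walk ((f m : V)) ((g n : V)) := (p.append w).append q.reverse with hW
  have hWsupp : ∀ x ∈ W.support, x ∉ T := by
    intro x hx
    rw [hW, SimpleGraph.Walk.mem_support_append_iff,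
      SimpleGraph.Walk.mem_support_append_iff] at hx
    rcases hx with (hx | hx) | hx
    · exact fun h => hp x hx (Or.inl h)
    · obtain ⟨i, hi1, hi2⟩ := hw x hx
      intro h
      have : i ≤ N := hN (by simp only [Set.mem_setOf_eq, ← hi2]; exact h)
      have : N < min k k' := lt_min hkN hk'N
      omega
    · rw [SimpleGraph.Walk.support_reverse, List.mem_reverse] at hx
      exact fun h => hq x hx (Or.inl h)
  have hWA : ∀ x ∈ W.support, x ∈ ((Dom G r)ᶜ : Set V) := by
    intro x hx h
    exact hWsupp x hx (Or.inr h)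
  obtain ⟨Q, hQ⟩ := lift_walk_induce (A := ((Dom G r)ᶜ : Set V)) W hWA
  refine ⟨m, n, ?_⟩
  have e1 : (⟨(f m : V), hWA _ W.start_mem_support⟩ : ((Dom G r)ᶜ : Set V)) = f m :=
    Subtype.ext rfl
  have e2 : (⟨(g n : V), hWA _ W.end_mem_support⟩ : ((Dom G r)ᶜ : Set V)) = g n :=
    Subtype.ext rfl
  refine ⟨Q.copy e1 e2, ?_⟩
  intro x hx
  intro hxS
  have hx' : x ∈ Q.support := by
    have h := SimpleGraph.Walk.support_copy Q e1 e2
    exact h ▸ hx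
  exact hWsupp x (hQ x hx') (Or.inl ⟨x, hxS, rfl⟩)

end Paper
end

section
/- Let G be a graph, ω an end of G with Dom(ω) finite, such that G_ω = G − Dom(ω) contains a ray of ω belonging to the end ω̂ of G_ω. Then G_ω contains an infinite sequence (Ĥ_i) of distinct ω̂-regions such that Ĥ_{i+1} ⊆ Ĥ_i − ∂_v Ĥ_i and ∂_v Ĥ_{i+1} is a minimal ∂_v Ĥ_i–Ω(Ĥ_{i+1}) separator for every i (i.e., a sequence converging to ω̂). -/
open scoped ENNReal

namespace Paper

variable {V : Type*} {W : Type*}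

/-! ### Auxiliary machinery for `exists_converging_sequence` -/

section ConvAux

open SimpleGraph

variable {α : Type*} {H : SimpleGraph α}

lemma reachAvoid_mono {S T : Set α} (hTS : T ⊆ S) {u v : α}
    (h : ReachAvoid H S u v) : ReachAvoid H T u v := by
  obtain ⟨p, hp⟩ := h
  exact ⟨p, fun x hx hxT => hp x hx (hTS hxT)⟩

lemma reachAvoid_refl {S : Set α} {u : α} (hu : u ∉ S) : ReachAvoid H S u u :=
  ⟨Walk.nil, by simpa using hu⟩

lemma reachAvoid_symm {S : Set α} {u v : α} (h : ReachAvoid H S u v) :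
    ReachAvoid H S v u := by
  obtain ⟨p, hp⟩ := h
  refine ⟨p.reverse, fun x hx => hp x ?_⟩
  rwa [Walk.support_reverse, List.mem_reverse] at hx

lemma reachAvoid_trans {S : Set α} {u v w : α} (h1 : ReachAvoid H S u v)
    (h2 : ReachAvoid H S v w) : ReachAvoid H S u w := by
  obtain ⟨p, hp⟩ := h1; obtain ⟨q, hq⟩ := h2
  refine ⟨p.append q, fun x hx => ?_⟩
  rw [Walk.mem_support_append_iff] at hx
  exact hx.elim (hp x) (hq x)

lemma ReachAvoid.start_not_mem {S : Set α} {u v : α} (h : ReachAvoid H S u v) :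
    u ∉ S := by
  obtain ⟨p, hp⟩ := h; exact hp u p.start_mem_support

lemma ReachAvoid.end_not_mem {S : Set α} {u v : α} (h : ReachAvoid H S u v) :
    v ∉ S := by
  obtain ⟨p, hp⟩ := h; exact hp v p.end_mem_support

lemma exists_firstIn {u w : α} (p : H.Walk u w) (T : Set α) (hw : w ∈ T) :
    ∃ x, x ∈ T ∧ ∃ q : H.Walk u x,
      (∀ y ∈ q.support, y ∈ p.support) ∧ (∀ y ∈ q.support, y ∈ T → y = x) := by
  induction p with
  | nil => exact ⟨_, hw, Walk.nil, by simp, by simp⟩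
  | @cons a b c h p ih =>
      by_cases ha : a ∈ T
      · exact ⟨a, ha, Walk.nil, by simp, by simp⟩
      · obtain ⟨x, hx, q, hq1, hq2⟩ := ih hw
        refine ⟨x, hx, Walk.cons h q, ?_, ?_⟩
        · intro y hy
          rw [Walk.support_cons, List.mem_cons] at hy ⊢
          exact hy.imp id fun h' => hq1 y h'
        · intro y hy hyT
          rw [Walk.support_cons, List.mem_cons] at hy
          rcases hy with rfl | hy
          · exact absurd hyT ha
          · exact hq2 y hy hyT

lemma exists_lastIn {u w : α} (p : H.Walk u w) (T : Set α) (hu : u ∈ T) :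
    ∃ x, x ∈ T ∧ ∃ q : H.Walk x w,
      (∀ y ∈ q.support, y ∈ p.support) ∧ (∀ y ∈ q.support, y ∈ T → y = x) := by
  obtain ⟨x, hx, q, hq1, hq2⟩ := exists_firstIn p.reverse T hu
  refine ⟨x, hx, q.reverse, fun y hy => ?_,
    fun y hy => hq2 y (by rwa [Walk.support_reverse, List.mem_reverse] at hy)⟩
  rw [Walk.support_reverse, List.mem_reverse] at hy
  have := hq1 y hy
  rwa [Walk.support_reverse, List.mem_reverse] at this

lemma exists_suffix_after_last {u w s : α} (p : H.Walk u w) (hs : s ∈ p.support)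
    (hne : s ≠ w) :
    ∃ x, H.Adj s x ∧ ∃ q : H.Walk x w,
      (∀ y ∈ q.support, y ∈ p.support) ∧ s ∉ q.support := by
  classical
  have hs' : s ∈ p.reverse.support := by
    rwa [Walk.support_reverse, List.mem_reverse]
  have hc : (p.reverse.takeUntil s hs').support.count s = 1 :=
    p.reverse.count_support_takeUntil_eq_one hs'
  have hsub : (p.reverse.takeUntil s hs').support ⊆ p.reverse.support :=
    Walk.support_takeUntil_subset _ hs'
  obtain ⟨x, hadj, q, hq⟩ := Walk.exists_eq_cons_of_ne hne (p.reverse.takeUntil s hs').reverse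
  have hsupp : (p.reverse.takeUntil s hs').reverse.support = s :: q.support := by
    rw [hq, Walk.support_cons]
  have h1 : (s :: q.support).count s = 1 := by
    rw [← hsupp, Walk.support_reverse, List.count_reverse]
    exact hc
  have hnot : s ∉ q.support := by
    rw [List.count_cons_self] at h1
    exact fun hmem => by
      have := List.count_pos_iff.mpr hmem
      omega
  refine ⟨x, hadj, q, fun y hy => ?_, hnot⟩
  have h2 : y ∈ (p.reverse.takeUntil s hs').reverse.support := by
    rw [hsupp]; exact List.mem_cons_of_mem _ hy
  rw [Walk.support_reverse, List.mem_reverse] at h2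
  have h3 := hsub h2
  rwa [Walk.support_reverse, List.mem_reverse] at h3

lemma exists_prefix_before_first {u w s : α} (p : H.Walk u w) (hs : s ∈ p.support)
    (hne : s ≠ u) :
    ∃ x, H.Adj s x ∧ ∃ q : H.Walk u x,
      (∀ y ∈ q.support, y ∈ p.support) ∧ s ∉ q.support := by
  obtain ⟨x, hadj, q, hq1, hq2⟩ := exists_suffix_after_last p.reverse
    (by rwa [Walk.support_reverse, List.mem_reverse]) hne
  refine ⟨x, hadj, q.reverse, fun y hy => ?_, ?_⟩
  · have := hq1 y (by rwa [Walk.support_reverse, List.mem_reverse] at hy)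
    rwa [Walk.support_reverse, List.mem_reverse] at this
  · rwa [Walk.support_reverse, List.mem_reverse]

lemma reachable_induce_of_walk {A : Set α} {u w : α} (p : H.Walk u w)
    (hp : ∀ y ∈ p.support, y ∈ A) (hu : u ∈ A) (hw : w ∈ A) :
    (H.induce A).Reachable ⟨u, hu⟩ ⟨w, hw⟩ := by
  induction p with
  | nil => rfl
  | @cons a b c h p ih =>
      have hb : b ∈ A := hp b (by simp)
      have hadj : (H.induce A).Adj ⟨a, hu⟩ ⟨b, hb⟩ := h
      exact hadj.reachable.trans
        (ih (fun y hy => hp y (by rw [Walk.support_cons]; exact List.mem_cons_of_mem _ hy)) hb hw)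

lemma ray_segment {g : ℕ → α} (hg : ∀ n, H.Adj (g n) (g (n + 1))) {a b : ℕ} (hab : a ≤ b) :
    ∃ p : H.Walk (g a) (g b), ∀ x ∈ p.support, ∃ k, a ≤ k ∧ k ≤ b ∧ x = g k := by
  induction b, hab using Nat.le_induction with
  | base =>
      refine ⟨Walk.nil, fun x hx => ?_⟩
      simp only [Walk.support_nil, List.mem_singleton] at hx
      exact ⟨a, le_rfl, le_rfl, hx⟩
  | succ b hab ih =>
      obtain ⟨p, hp⟩ := ih
      refine ⟨p.append (Walk.cons (hg b) Walk.nil), fun x hx => ?_⟩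
      rw [Walk.mem_support_append_iff] at hx
      rcases hx with hx | hx
      · obtain ⟨k, h1, h2, h3⟩ := hp x hx
        exact ⟨k, h1, h2.trans (Nat.le_succ b), h3⟩
      · rw [Walk.support_cons] at hx
        simp only [Walk.support_nil, List.mem_cons, List.mem_singleton] at hx
        rcases hx with rfl | rfl | h
        · exact ⟨b, hab, Nat.le_succ b, rfl⟩
        · exact ⟨b + 1, by omega, le_rfl, rfl⟩
        · exact absurd h (by simp)

end ConvAux
section DelEnd

open SimpleGraph

variable {V : Type*}

variable (G : SimpleGraph V) (r : ℕ → V)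

/-- `f` avoids `S` from index `m` on. -/
def TailFree (f : ℕ → ((Dom G r)ᶜ : Set V)) (S : Set ((Dom G r)ᶜ : Set V)) (m : ℕ) : Prop :=
  ∀ k, m ≤ k → f k ∉ S

/-- Vertices joinable to the tail of `f` by a walk avoiding `S`. -/
def CC (f : ℕ → ((Dom G r)ᶜ : Set V)) (S : Set ((Dom G r)ᶜ : Set V)) :
    Set ((Dom G r)ᶜ : Set V) :=
  {w | ∃ m, TailFree G r f S m ∧ ReachAvoid (Gmin G r) S w (f m)}

/-- `S` separates every vertex of `X` from the tail of `f`. -/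
def Sep0 (f : ℕ → ((Dom G r)ᶜ : Set V)) (X S : Set ((Dom G r)ᶜ : Set V)) : Prop :=
  ∀ x ∈ X, x ∉ CC G r f S

/-- The region determined by a separator `S`. -/
def HH (f : ℕ → ((Dom G r)ᶜ : Set V)) (S : Set ((Dom G r)ᶜ : Set V)) :
    Set ((Dom G r)ᶜ : Set V) :=
  CC G r f S ∪ S

variable {G r}
variable {f : ℕ → ((Dom G r)ᶜ : Set V)}

lemma TailFree.mono {S : Set ((Dom G r)ᶜ : Set V)} {m m' : ℕ} (h : TailFree G r f S m)
    (hmm : m ≤ m') : TailFree G r f S m' := fun k hk => h k (hmm.trans hk)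

lemma TailFree.anti {S S' : Set ((Dom G r)ᶜ : Set V)} (hss : S' ⊆ S) {m : ℕ}
    (h : TailFree G r f S m) : TailFree G r f S' m := fun k hk hm => h k hk (hss hm)

lemma tailFree_exists (hfi : Function.Injective f) {S : Set ((Dom G r)ᶜ : Set V)}
    (hS : S.Finite) : ∃ m, TailFree G r f S m := by
  have hfin : {k : ℕ | f k ∈ S}.Finite := hS.preimage hfi.injOn
  obtain ⟨N, hN⟩ := hfin.bddAbove
  refine ⟨N + 1, fun k hk hfk => ?_⟩
  have : k ≤ N := hN hfk
  omega

lemma mem_CC_tail {S : Set ((Dom G r)ᶜ : Set V)} {m m' : ℕ}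
    (htf : TailFree G r f S m) (hmm : m ≤ m') : f m' ∈ CC G r f S :=
  ⟨m', htf.mono hmm, reachAvoid_refl (htf m' hmm)⟩

lemma CC.not_mem {S : Set ((Dom G r)ᶜ : Set V)} {w : ((Dom G r)ᶜ : Set V)}
    (hw : w ∈ CC G r f S) : w ∉ S := by
  obtain ⟨m, _, hre⟩ := hw; exact hre.start_not_mem

lemma CC.reach (hf : IsRay (Gmin G r) f) {S : Set ((Dom G r)ᶜ : Set V)}
    {w : ((Dom G r)ᶜ : Set V)} (hw : w ∈ CC G r f S) {m' : ℕ}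
    (htf' : TailFree G r f S m') : ReachAvoid (Gmin G r) S w (f m') := by
  obtain ⟨m, htf, hre⟩ := hw
  rcases le_total m m' with h | h
  · obtain ⟨p, hp⟩ := ray_segment hf.adj h
    refine reachAvoid_trans hre ⟨p, fun x hx hxS => ?_⟩
    obtain ⟨k, hk1, _, rfl⟩ := hp x hx
    exact htf k hk1 hxS
  · obtain ⟨p, hp⟩ := ray_segment hf.adj h
    refine reachAvoid_trans hre (reachAvoid_symm ⟨p, fun x hx hxS => ?_⟩)
    obtain ⟨k, hk1, _, rfl⟩ := hp x hx
    exact htf' k hk1 hxS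

lemma CC.of_reach {S : Set ((Dom G r)ᶜ : Set V)} {u w : ((Dom G r)ᶜ : Set V)}
    (h : ReachAvoid (Gmin G r) S u w) (hw : w ∈ CC G r f S) : u ∈ CC G r f S := by
  obtain ⟨m, htf, hre⟩ := hw
  exact ⟨m, htf, reachAvoid_trans h hre⟩

lemma CC.adj {S : Set ((Dom G r)ᶜ : Set V)} {u w : ((Dom G r)ᶜ : Set V)}
    (hu : u ∈ CC G r f S) (hadj : (Gmin G r).Adj w u) (hw : w ∉ S) : w ∈ CC G r f S := by
  refine CC.of_reach ⟨Walk.cons hadj Walk.nil, ?_⟩ hu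
  intro x hx
  rw [Walk.support_cons] at hx
  simp only [Walk.support_nil, List.mem_cons, List.mem_singleton] at hx
  rcases hx with rfl | rfl | h
  · exact hw
  · exact CC.not_mem hu
  · exact absurd h (by simp)

lemma CC.mono {S S' : Set ((Dom G r)ᶜ : Set V)} (hss : S' ⊆ S) :
    CC G r f S ⊆ CC G r f S' := by
  rintro w ⟨m, htf, hre⟩
  exact ⟨m, htf.anti hss, reachAvoid_mono hss hre⟩

lemma mem_CC_of_support {S : Set ((Dom G r)ᶜ : Set V)} {u : ((Dom G r)ᶜ : Set V)} {m : ℕ}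
    (htf : TailFree G r f S m) {p : (Gmin G r).Walk u (f m)}
    (hp : ∀ x ∈ p.support, x ∉ S) : ∀ y ∈ p.support, y ∈ CC G r f S := by
  classical
  intro y hy
  have hy' : y ∈ p.reverse.support := by rwa [Walk.support_reverse, List.mem_reverse]
  refine ⟨m, htf, reachAvoid_symm ⟨p.reverse.takeUntil y hy', fun x hx => ?_⟩⟩
  have := Walk.support_takeUntil_subset _ hy' hx
  rw [Walk.support_reverse, List.mem_reverse] at this
  exact hp x this

end DelEnd
section ClaimA

open SimpleGraph

variable {V : Type*} {G : SimpleGraph V} {r : ℕ → V}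
variable {f : ℕ → ((Dom G r)ᶜ : Set V)}

/-- If a vertex of `G_ω` cannot be separated from the tail of `f` by any finite
set, then it dominates `r`; hence a finite separator exists. -/
lemma claimA (hr : IsRay G r) (hf : IsRay (Gmin G r) f)
    (hfe : EquivRay G (fun n => (f n : V)) r) (v : ((Dom G r)ᶜ : Set V)) :
    ∃ S : Set ((Dom G r)ᶜ : Set V), S.Finite ∧ v ∉ S ∧ v ∉ CC G r f S := by
  classical
  by_contra hcon
  push_neg at hcon
  -- hcon : ∀ S, S.Finite → v ∉ S → v ∈ CC G r f S
  have hvdom : DominatesRay G (v : V) r := by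
    let emb : Gmin G r →g G := ⟨Subtype.val, fun {a b} h => h⟩
    -- Core step: avoid any finite set `F` (not containing `v`), reach far along `r`.
    have core : ∀ F : Set V, F.Finite → (v : V) ∉ F → ∀ M : ℕ,
        ∃ m, M < m ∧ ∃ q : G.Walk (v : V) (r m), q.IsPath ∧ ∀ x ∈ q.support, x ∉ F := by
      intro F hF hvF M
      have hF' : {w : ((Dom G r)ᶜ : Set V) | (w : V) ∈ F}.Finite :=
        hF.preimage Subtype.val_injective.injOn
      obtain ⟨m₁, htf₁, W₁, hW₁⟩ := hcon _ hF' hvF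
      set S₂ : Set V :=
        (F ∪ (r '' {k | k ≤ M})) ∪ ((fun n => (f n : V)) '' {k | k < m₁}) with hS₂
      have hS₂f : S₂.Finite :=
        ((hF.union ((Set.finite_Iic M).image r)).union ((Set.finite_Iio m₁).image _))
      obtain ⟨m₂, n₂, W₂, hW₂⟩ := hfe S₂ hS₂f
      have hm₁₂ : m₁ ≤ m₂ := by
        by_contra hlt
        rw [not_le] at hlt
        exact hW₂ _ W₂.start_mem_support (Or.inr ⟨m₂, hlt, rfl⟩)
      have hn₂ : M < n₂ := by
        by_contra hle
        rw [not_lt] at hle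
        exact hW₂ _ W₂.end_mem_support (Or.inl (Or.inr ⟨n₂, hle, rfl⟩))
      obtain ⟨seg, hseg⟩ := ray_segment hf.adj hm₁₂
      refine ⟨n₂, hn₂, ?_⟩
      set q₀ : G.Walk (v : V) (r n₂) :=
        ((W₁.map emb).append (seg.map emb)).append W₂ with hq₀
      have hq₀F : ∀ x ∈ q₀.support, x ∉ F := by
        intro x hx
        rw [hq₀, Walk.mem_support_append_iff, Walk.mem_support_append_iff] at hx
        rcases hx with (hx | hx) | hx
        · rw [Walk.support_map, List.mem_map] at hx
          obtain ⟨y, hy, rfl⟩ := hx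
          exact hW₁ y hy
        · rw [Walk.support_map, List.mem_map] at hx
          obtain ⟨y, hy, rfl⟩ := hx
          obtain ⟨k, hk1, _, rfl⟩ := hseg y hy
          exact htf₁ k hk1
        · exact fun hxF => hW₂ x hx (Or.inl (Or.inl hxF))
      exact ⟨q₀.bypass, q₀.bypass_isPath,
        fun x hx => hq₀F x (q₀.support_bypass_subset hx)⟩
    -- Iterate the core step.
    let D := Σ' (F : Set V) (M : ℕ) (m : ℕ) (q : G.Walk (v : V) (r m)),
      F.Finite ∧ (v : V) ∉ F ∧ q.IsPath ∧ M < m ∧ ∀ x ∈ q.support, x ∉ F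
    have hstep : ∀ d : D, ∃ d' : D,
        d'.1 = d.1 ∪ {x | x ∈ d.2.2.2.1.support ∧ x ≠ (v : V)} ∧
          d'.2.1 = d.2.2.1 := by
      rintro ⟨F, M, m, q, hF, hvF, hq, hMm, hqF⟩
      set F' : Set V := F ∪ {x | x ∈ q.support ∧ x ≠ (v : V)} with hF'd
      have hF'f : F'.Finite :=
        hF.union ((q.support.finite_toSet).subset fun x hx => hx.1)
      have hvF' : (v : V) ∉ F' := by
        rintro (h | h)
        · exact hvF h
        · exact h.2 rfl
      obtain ⟨m', hm', q', hq', hq'F⟩ := core F' hF'f hvF' m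
      exact ⟨⟨F', m, m', q', hF'f, hvF', hq', hm', hq'F⟩, rfl, rfl⟩
    choose nx h1 h2 using hstep
    obtain ⟨m0, hm0, q0, hq0, hq0F⟩ := core ∅ Set.finite_empty (Set.notMem_empty _) 0
    let d0 : D := ⟨∅, 0, m0, q0, Set.finite_empty, Set.notMem_empty _, hq0, hm0, hq0F⟩
    let seq : ℕ → D := fun n => nx^[n] d0
    have hseq : ∀ n, seq (n + 1) = nx (seq n) := fun n =>
      Function.iterate_succ_apply' nx n d0
    let Fn : ℕ → Set V := fun n => (seq n).1
    let mn : ℕ → ℕ := fun n => (seq n).2.2.1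
    let pn : ∀ n, G.Walk (v : V) (r (mn n)) := fun n => (seq n).2.2.2.1
    have hprops : ∀ n, (pn n).IsPath ∧ (seq n).2.1 < mn n ∧ ∀ x ∈ (pn n).support, x ∉ Fn n :=
      fun n => ⟨(seq n).2.2.2.2.2.2.1, (seq n).2.2.2.2.2.2.2.1, (seq n).2.2.2.2.2.2.2.2⟩
    have hFsucc : ∀ n, Fn (n + 1) = Fn n ∪ {x | x ∈ (pn n).support ∧ x ≠ (v : V)} := by
      intro n
      have := h1 (seq n)
      rw [← hseq n] at this
      exact this
    have hMsucc : ∀ n, (seq (n + 1)).2.1 = mn n := by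
      intro n
      have := h2 (seq n)
      rw [← hseq n] at this
      exact this
    have hmlt : ∀ n, mn n < mn (n + 1) := by
      intro n
      have := (hprops (n + 1)).2.1
      rwa [hMsucc n] at this
    have hmono : ∀ j n, j ≤ n → Fn j ⊆ Fn n := by
      intro j n hjn
      induction n, hjn using Nat.le_induction with
      | base => exact subset_rfl
      | succ n hjn ih =>
          refine ih.trans ?_
          rw [hFsucc n]
          exact Set.subset_union_left
    have hsupp : ∀ j n, j < n → ∀ x ∈ (pn j).support, x ≠ (v : V) → x ∈ Fn n := by
      intro j n hjn x hx hxv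
      have h1' : x ∈ Fn (j + 1) := by
        rw [hFsucc j]; exact Or.inr ⟨hx, hxv⟩
      exact hmono (j + 1) n hjn h1'
    refine ⟨mn, pn, (strictMono_nat_of_lt_succ hmlt).injective, fun n => (hprops n).1, ?_⟩
    intro a b hab x hxa hxb
    by_contra hxv
    rcases Nat.lt_or_ge a b with h | h
    · exact (hprops b).2.2 x hxb (hsupp a b h x hxa hxv)
    · have h' : b < a := lt_of_le_of_ne h (Ne.symm hab)
      exact (hprops a).2.2 x hxa (hsupp b a h' x hxb hxv)
  exact v.2 hvdom

end ClaimA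
section SepLemmas

open SimpleGraph

variable {V : Type*} {G : SimpleGraph V} {r : ℕ → V}
variable {f : ℕ → ((Dom G r)ᶜ : Set V)}

lemma sep_of_finite (hr : IsRay G r) (hf : IsRay (Gmin G r) f)
    (hfe : EquivRay G (fun n => (f n : V)) r) {X : Set ((Dom G r)ᶜ : Set V)}
    (hX : X.Finite) :
    ∃ S : Set ((Dom G r)ᶜ : Set V), S.Finite ∧ S ∩ X = ∅ ∧ Sep0 G r f X S := by
  classical
  choose Sfun h1 h2 h3 using fun v => claimA hr hf hfe (f := f) v
  set U : Set ((Dom G r)ᶜ : Set V) := ⋃ x ∈ X, Sfun x with hU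
  have hUf : U.Finite := hX.biUnion fun x _ => h1 x
  refine ⟨U \ X, hUf.diff, Set.diff_inter_self, ?_⟩
  intro v hv hvCC
  obtain ⟨Nu, htfU⟩ := tailFree_exists hf.inj (hUf.union hX)
  have htfS : TailFree G r f (U \ X) Nu :=
    htfU.anti (Set.diff_subset.trans Set.subset_union_left)
  obtain ⟨p, hp⟩ := CC.reach hf hvCC htfS
  obtain ⟨x, hxX, q, hq1, hq2⟩ := exists_lastIn p X hv
  refine h3 x ⟨Nu, htfU.anti ((Set.subset_biUnion_of_mem hxX).trans Set.subset_union_left),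
    ⟨q, fun y hy hyS => ?_⟩⟩
  -- y ∈ Sfun x; y avoids U \ X, so y ∈ X, hence y = x; but x ∉ Sfun x.
  have hyU : y ∈ U := Set.mem_biUnion hxX hyS
  have hyX : y ∈ X := by
    by_contra hyX
    exact hp y (hq1 y hy) ⟨hyU, hyX⟩
  exact h2 x (hq2 y hy hyX ▸ hyS)

lemma exists_minimal_subset {β : Type*} (P : Set β → Prop) :
    ∀ (n : ℕ) (S : Set β), S.Finite → S.ncard ≤ n → P S →
      ∃ T, T ⊆ S ∧ P T ∧ ∀ T', T' ⊂ T → ¬ P T' := by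
  intro n
  induction n with
  | zero =>
      intro S hS hcard hP
      have hSe : S = ∅ := by
        rw [← Set.ncard_eq_zero hS]; omega
      subst hSe
      exact ⟨∅, subset_rfl, hP, fun T' hT' _ => hT'.ne (Set.subset_empty_iff.mp hT'.subset)⟩
  | succ n ih =>
      intro S hS hcard hP
      by_cases hex : ∃ T', T' ⊂ S ∧ P T'
      · obtain ⟨T', hT'S, hPT'⟩ := hex
        have hT'f : T'.Finite := hS.subset hT'S.subset
        have hle : T'.ncard ≤ n := by
          have := Set.ncard_lt_ncard hT'S hS
          omega
        obtain ⟨T, ht1, ht2, ht3⟩ := ih T' hT'f hle hPT'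
        exact ⟨T, ht1.trans hT'S.subset, ht2, ht3⟩
      · push_neg at hex
        exact ⟨S, subset_rfl, hP, fun T' hT' hPT' => hex T' hT' hPT'⟩

lemma minsep_structure (hf : IsRay (Gmin G r) f) {X S : Set ((Dom G r)ᶜ : Set V)}
    (hSf : S.Finite) (hdisj : S ∩ X = ∅) (hsep : Sep0 G r f X S)
    (hmin : ∀ T, T ⊂ S → ¬ Sep0 G r f X T) {s : ((Dom G r)ᶜ : Set V)} (hs : s ∈ S) :
    (∃ u, u ∈ CC G r f S ∧ (Gmin G r).Adj s u) ∧
      (∃ u, (u ∉ CC G r f S ∧ u ∉ S) ∧ (Gmin G r).Adj s u) := by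
  classical
  obtain ⟨N, htfS⟩ := tailFree_exists hf.inj hSf
  have hss : S \ {s} ⊂ S := ⟨Set.diff_subset, fun h => (h hs).2 rfl⟩
  have hnot := hmin (S \ {s}) hss
  rw [Sep0] at hnot
  push_neg at hnot
  obtain ⟨x, hxX, hxCC⟩ := hnot
  obtain ⟨p, hp⟩ := CC.reach hf hxCC (htfS.anti Set.diff_subset)
  have hsp : s ∈ p.support := by
    by_contra hsp
    refine hsep x hxX ⟨N, htfS, ⟨p, fun y hy hyS => ?_⟩⟩
    rcases eq_or_ne y s with rfl | hne
    · exact hsp hy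
    · exact hp y hy ⟨hyS, hne⟩
  constructor
  · have hsw : s ≠ f N := fun h => htfS N le_rfl (h ▸ hs)
    obtain ⟨u, hadj, q, hq1, hq2⟩ := exists_suffix_after_last p hsp hsw
    have hqS : ∀ y ∈ q.support, y ∉ S := by
      intro y hy hyS
      rcases eq_or_ne y s with rfl | hne
      · exact hq2 hy
      · exact hp y (hq1 y hy) ⟨hyS, hne⟩
    exact ⟨u, CC.of_reach ⟨q, hqS⟩ (mem_CC_tail htfS le_rfl), hadj⟩
  · have hsx : s ≠ x := by
      rintro rfl
      have : s ∈ S ∩ X := ⟨hs, hxX⟩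
      rw [hdisj] at this
      exact this
    obtain ⟨u, hadj, q, hq1, hq2⟩ := exists_prefix_before_first p hsp hsx
    have hqS : ∀ y ∈ q.support, y ∉ S := by
      intro y hy hyS
      rcases eq_or_ne y s with rfl | hne
      · exact hq2 hy
      · exact hp y (hq1 y hy) ⟨hyS, hne⟩
    have huS : u ∉ S := hqS u q.end_mem_support
    have huCC : u ∉ CC G r f S := fun hu => hsep x hxX (CC.of_reach ⟨q, hqS⟩ hu)
    exact ⟨u, ⟨huCC, huS⟩, hadj⟩

end SepLemmas
section RegionLemmas

open SimpleGraph

variable {V : Type*} {G : SimpleGraph V} {r : ℕ → V}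
variable {f : ℕ → ((Dom G r)ᶜ : Set V)}

lemma HH_vBoundary {S : Set ((Dom G r)ᶜ : Set V)}
    (hstruct : ∀ s ∈ S, (∃ u, u ∈ CC G r f S ∧ (Gmin G r).Adj s u) ∧
      (∃ u, (u ∉ CC G r f S ∧ u ∉ S) ∧ (Gmin G r).Adj s u)) :
    vBoundary (Gmin G r) (HH G r f S) = S := by
  ext x
  constructor
  · rintro ⟨hx, y, hy, hadj⟩
    rcases hx with hx | hx
    · exfalso
      refine hy (Or.inl (CC.adj hx hadj.symm fun hyS => hy (Or.inr hyS)))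
    · exact hx
  · intro hx
    obtain ⟨-, u, ⟨huCC, huS⟩, hadj⟩ := hstruct x hx
    exact ⟨Or.inr hx, u, fun hu => hu.elim huCC huS, hadj⟩

lemma HH_connected (hf : IsRay (Gmin G r) f) {S : Set ((Dom G r)ᶜ : Set V)}
    (hSf : S.Finite)
    (hstruct : ∀ s ∈ S, ∃ u, u ∈ CC G r f S ∧ (Gmin G r).Adj s u) :
    ((Gmin G r).induce (HH G r f S)).Connected := by
  obtain ⟨N, htfS⟩ := tailFree_exists hf.inj hSf
  have hbase : f N ∈ CC G r f S := mem_CC_tail htfS le_rfl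
  have hcc : ∀ y (hy : y ∈ CC G r f S),
      ((Gmin G r).induce (HH G r f S)).Reachable ⟨y, Or.inl hy⟩ ⟨f N, Or.inl hbase⟩ := by
    intro y hy
    obtain ⟨p, hp⟩ := CC.reach hf hy htfS
    exact reachable_induce_of_walk p
      (fun z hz => Or.inl (mem_CC_of_support htfS hp z hz)) _ _
  have key : ∀ x (hx : x ∈ HH G r f S),
      ((Gmin G r).induce (HH G r f S)).Reachable ⟨x, hx⟩ ⟨f N, Or.inl hbase⟩ := by
    intro x hx
    rcases hx with hx | hx
    · exact hcc x hx
    · obtain ⟨u, huCC, hadj⟩ := hstruct x hx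
      have h2 : ((Gmin G r).induce (HH G r f S)).Adj ⟨x, Or.inr hx⟩ ⟨u, Or.inl huCC⟩ := hadj
      exact h2.reachable.trans (hcc u huCC)
  rw [SimpleGraph.connected_iff]
  refine ⟨fun a b => ?_, ⟨⟨f N, Or.inl hbase⟩⟩⟩
  obtain ⟨a, ha⟩ := a
  obtain ⟨b, hb⟩ := b
  exact (key a ha).trans (key b hb).symm

lemma inDeletedEnd_tail (hf0 : InDeletedEnd G r f) (N : ℕ) :
    InDeletedEnd G r (fun n => f (n + N)) := by
  obtain ⟨⟨hinj, hadj⟩, hequiv⟩ := hf0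
  refine ⟨⟨fun a b hab => by have := hinj hab; omega, fun n => ?_⟩, ?_⟩
  · have := hadj (n + N)
    rwa [show n + N + 1 = n + 1 + N by omega] at this
  · intro S hS
    obtain ⟨m, n, hmn⟩ := hequiv (S ∪ ((fun k => (f k : V)) '' {k | k < N}))
      (hS.union ((Set.finite_Iio N).image _))
    have hmN : N ≤ m := by
      by_contra h
      rw [not_le] at h
      exact hmn.start_not_mem (Or.inr ⟨m, h, rfl⟩)
    refine ⟨m - N, n, ?_⟩
    have h1 : m - N + N = m := by omega
    simpa [h1] using reachAvoid_mono Set.subset_union_left hmn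

lemma HH_nested (hf : IsRay (Gmin G r) f) {S S' : Set ((Dom G r)ᶜ : Set V)}
    (hSf : S.Finite) (hS'f : S'.Finite) (hdisj : S' ∩ S = ∅)
    (hsep : Sep0 G r f S S')
    (hstruct : ∀ s ∈ S', ∃ u, u ∈ CC G r f S' ∧ (Gmin G r).Adj s u) :
    HH G r f S' ⊆ CC G r f S := by
  classical
  obtain ⟨N, htf⟩ := tailFree_exists hf.inj (hSf.union hS'f)
  have hCC : CC G r f S' ⊆ CC G r f S := by
    intro w hw
    obtain ⟨p, hp⟩ := CC.reach hf hw (htf.anti Set.subset_union_right)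
    by_cases hpS : ∀ y ∈ p.support, y ∉ S
    · exact ⟨N, htf.anti Set.subset_union_left, ⟨p, hpS⟩⟩
    · exfalso
      push_neg at hpS
      obtain ⟨s, hsp, hsS⟩ := hpS
      refine hsep s hsS ⟨N, htf.anti Set.subset_union_right, ?_⟩
      have hs' : s ∈ p.reverse.support := by
        rwa [Walk.support_reverse, List.mem_reverse]
      refine reachAvoid_symm ⟨p.reverse.takeUntil s hs', fun y hy => hp y ?_⟩
      have := Walk.support_takeUntil_subset _ hs' hy
      rwa [Walk.support_reverse, List.mem_reverse] at this
  intro w hw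
  rcases hw with hw | hw
  · exact hCC hw
  · obtain ⟨u, huCC, hadj⟩ := hstruct w hw
    have hwS : w ∉ S := fun h => by
      have : w ∈ S' ∩ S := ⟨hw, h⟩
      rw [hdisj] at this
      exact this
    exact CC.adj (hCC huCC) hadj hwS

end RegionLemmas

/-- if `Dom(ω)` is finite and `G_ω` contains a ray of `ω`, then
`G_ω` contains a sequence of distinct nested `ω̂`-regions with the minimal
separation property, i.e. a sequence converging to `ω̂`. -/
theorem exists_converging_sequence (G : SimpleGraph V) (r : ℕ → V)
    (hr : IsRay G r) (hfin : (Dom G r).Finite)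
    (hray : ∃ f, InDeletedEnd G r f) :
    ∃ A : ℕ → Set ((Dom G r)ᶜ : Set V), Converges G r A := by
  classical
  obtain ⟨f, hf0⟩ := hray
  have hf : IsRay (Gmin G r) f := hf0.1
  have hfe : EquivRay G (fun n => (f n : V)) r := hf0.2
  -- `Good` sets and the inductive step producing minimal separators.
  set Good : Set ((Dom G r)ᶜ : Set V) → Prop := fun S =>
    S.Finite ∧ S.Nonempty ∧ ∀ s ∈ S, s ∈ CC G r f (∅ : Set ((Dom G r)ᶜ : Set V))
    with hGoodDef
  set Rel : Set ((Dom G r)ᶜ : Set V) → Set ((Dom G r)ᶜ : Set V) → Prop := fun S S' =>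
    S' ∩ S = ∅ ∧ Sep0 G r f S S' ∧ (∀ T, T ⊂ S' → ¬ Sep0 G r f S T) ∧
      ∀ s ∈ S', (∃ u, u ∈ CC G r f S' ∧ (Gmin G r).Adj s u) ∧
        (∃ u, (u ∉ CC G r f S' ∧ u ∉ S') ∧ (Gmin G r).Adj s u)
    with hRelDef
  have hstep : ∀ S, Good S → ∃ S', Good S' ∧ Rel S S' := by
    intro S hS
    obtain ⟨hSf, hSne, hSreach⟩ := hS
    obtain ⟨S₀, hS₀f, hS₀disj, hS₀sep⟩ := sep_of_finite hr hf hfe hSf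
    obtain ⟨T, hTS₀, hTsep, hTmin⟩ :=
      exists_minimal_subset (Sep0 G r f S) S₀.ncard S₀ hS₀f le_rfl hS₀sep
    have hTf : T.Finite := hS₀f.subset hTS₀
    have hTdisj : T ∩ S = ∅ :=
      Set.subset_empty_iff.mp (hS₀disj ▸ Set.inter_subset_inter_left S hTS₀)
    have hTne : T.Nonempty := by
      rcases Set.eq_empty_or_nonempty T with rfl | h
      · exfalso
        obtain ⟨x, hx⟩ := hSne
        exact hTsep x hx (hSreach x hx)
      · exact h
    have hstruct : ∀ s ∈ T, (∃ u, u ∈ CC G r f T ∧ (Gmin G r).Adj s u) ∧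
        (∃ u, (u ∉ CC G r f T ∧ u ∉ T) ∧ (Gmin G r).Adj s u) :=
      fun s hs => minsep_structure hf hTf hTdisj hTsep hTmin hs
    refine ⟨T, ⟨hTf, hTne, fun s hs => ?_⟩, hTdisj, hTsep, hTmin, hstruct⟩
    obtain ⟨⟨u, huCC, hadj⟩, -⟩ := hstruct s hs
    exact CC.adj (CC.mono (Set.empty_subset T) huCC) hadj (Set.notMem_empty s)
  choose nx hGood hRel using hstep
  have hGood0 : Good {f 0} := by
    refine ⟨Set.finite_singleton _, Set.singleton_nonempty _, fun s hs => ?_⟩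
    rw [Set.mem_singleton_iff] at hs
    subst hs
    exact ⟨0, fun k _ => Set.notMem_empty _, reachAvoid_refl (Set.notMem_empty _)⟩
  let chain : ℕ → {S : Set ((Dom G r)ᶜ : Set V) // Good S} := fun n =>
    Nat.rec ⟨{f 0}, hGood0⟩ (fun _ p => ⟨nx p.1 p.2, hGood p.1 p.2⟩) n
  set Ss : ℕ → Set ((Dom G r)ᶜ : Set V) := fun n => (chain n).1 with hSsDef
  have hrel : ∀ n, Rel (Ss n) (Ss (n + 1)) := fun n => hRel (chain n).1 (chain n).2
  have hfin' : ∀ n, (Ss n).Finite := fun n => (chain n).2.1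
  have hne : ∀ n, (Ss n).Nonempty := fun n => (chain n).2.2.1
  -- the sequence of regions
  set A : ℕ → Set ((Dom G r)ᶜ : Set V) := fun i => HH G r f (Ss (i + 1)) with hA
  have hboundary : ∀ i, vBoundary (Gmin G r) (A i) = Ss (i + 1) :=
    fun i => HH_vBoundary ((hrel i).2.2.2)
  have hnest : ∀ i, A (i + 1) ⊆ CC G r f (Ss (i + 1)) := fun i =>
    HH_nested hf (hfin' (i + 1)) (hfin' (i + 2)) (hrel (i + 1)).1 (hrel (i + 1)).2.1
      (fun s hs => ((hrel (i + 1)).2.2.2 s hs).1)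
  have hsubdiff : ∀ i, A (i + 1) ⊆ A i \ vBoundary (Gmin G r) (A i) := by
    intro i w hw
    have hw' : w ∈ CC G r f (Ss (i + 1)) := hnest i hw
    rw [hboundary i]
    exact ⟨Or.inl hw', CC.not_mem hw'⟩
  have hstrict : ∀ i, A (i + 1) < A i := by
    intro i
    obtain ⟨s, hs⟩ := hne (i + 1)
    refine lt_of_le_of_ne (fun w hw => ((hsubdiff i hw).1 : w ∈ A i)) ?_
    intro hEq
    have hsA : s ∈ A i := Or.inr hs
    rw [← hEq] at hsA
    exact CC.not_mem (hnest i hsA) hs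
  refine ⟨A, ?_, ?_, hsubdiff, ?_⟩
  · exact (strictAnti_nat_of_succ_lt hstrict).injective
  · -- each A i is an ω̂-region
    intro i
    obtain ⟨N, htf⟩ := tailFree_exists hf.inj (hfin' (i + 1))
    refine ⟨HH_connected hf (hfin' (i + 1)) (fun s hs => ((hrel i).2.2.2 s hs).1), ?_, ?_⟩
    · rw [hboundary i]
      exact hfin' (i + 1)
    · refine ⟨fun n => f (n + N), inDeletedEnd_tail hf0 N, ?_⟩
      rintro x ⟨n, rfl⟩
      exact Or.inl (mem_CC_tail htf (by omega))
  · -- minimal separation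
    intro i
    rw [hboundary i, hboundary (i + 1)]
    obtain ⟨hdisj, hsep, hmin, hstruct⟩ := hrel (i + 1)
    constructor
    · constructor
      · -- Ss (i+1) ⊄ Ss (i+2)
        intro hsub
        obtain ⟨s, hs⟩ := hne (i + 1)
        have : s ∈ Ss (i + 2) ∩ Ss (i + 1) := ⟨hsub hs, hs⟩
        rw [hdisj] at this
        exact this
      · intro v hv g hg hrange n htail hreach
        have h1 : g n ∈ A (i + 1) := hrange ⟨n, rfl⟩
        have h2 : g n ∉ Ss (i + 2) := htail n le_rfl
        have h3 : g n ∈ CC G r f (Ss (i + 2)) := h1.resolve_right h2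
        exact hsep v hv (CC.of_reach hreach h3)
    · -- minimality
      intro T' hT' hSepBad
      obtain ⟨-, hforall⟩ := hSepBad
      have hnot := hmin T' hT'
      rw [Sep0] at hnot
      push_neg at hnot
      obtain ⟨x, hxX, hxCC⟩ := hnot
      obtain ⟨N₂, htf₂⟩ := tailFree_exists hf.inj (hfin' (i + 2))
      obtain ⟨N', htf'⟩ := tailFree_exists hf.inj ((hfin' (i + 2)).subset hT'.subset)
      have hreach : ReachAvoid (Gmin G r) T' x (f (N' + N₂)) :=
        CC.reach hf hxCC (htf'.mono (by omega))
      refine hforall x hxX (fun n => f (n + N₂)) (inDeletedEnd_tail hf0 N₂).1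
        (by rintro y ⟨n, rfl⟩; exact Or.inl (mem_CC_tail htf₂ (by omega))) N'
        (fun m hm => htf' (m + N₂) (by omega)) hreach

end Paper
end

section
/- Let G be a graph, ω an end of G, and G' an induced subgraph of G with finite vertex-boundary ∂_v^G G' such that some end ω' of G' contains rays of ω. Then Dom_G(ω) ⊆ V(G'), where Dom_G(ω) is the set of vertices of G dominating ω. -/
open scoped ENNReal

namespace Paper

variable {V : Type*} {W : Type*}

/-- Any walk from a vertex of `A` to a vertex outside `A` meets `vBoundary G A`. -/
lemma walk_meets_vBoundary (G : SimpleGraph V) (A : Set V) :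
    ∀ {a b : V} (p : G.Walk a b), a ∈ A → b ∉ A →
      ∃ x ∈ p.support, x ∈ vBoundary G A := by
  intro a b p
  induction p with
  | nil => intro ha hb; exact absurd ha hb
  | @cons u c b h q ih =>
    intro ha hb
    by_cases hc : c ∈ A
    · obtain ⟨x, hx, hxb⟩ := ih hc hb
      exact ⟨x, by simp [hx], hxb⟩
    · exact ⟨u, by simp, ⟨ha, c, hc, h⟩⟩

/-- A walk along a ray from `r n` to `r (n + d)`. -/
lemma ray_segment_s11 {G : SimpleGraph V} {r : ℕ → V} (hr : IsRay G r) (n : ℕ) :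
    ∀ d : ℕ, ∃ w : G.Walk (r n) (r (n + d)),
      ∀ x ∈ w.support, ∃ j, n ≤ j ∧ x = r j := by
  intro d
  induction d with
  | zero =>
    refine ⟨SimpleGraph.Walk.nil, ?_⟩
    intro x hx
    simp only [SimpleGraph.Walk.support_nil, List.mem_singleton] at hx
    exact ⟨n, le_rfl, hx⟩
  | succ d ih =>
    obtain ⟨w, hw⟩ := ih
    refine ⟨w.append (SimpleGraph.Walk.cons (hr.adj (n + d)) SimpleGraph.Walk.nil), ?_⟩
    intro x hx
    rw [SimpleGraph.Walk.mem_support_append_iff] at hx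
    rcases hx with hx | hx
    · exact hw x hx
    · simp only [SimpleGraph.Walk.support_cons, SimpleGraph.Walk.support_nil,
        List.mem_cons, List.mem_singleton, List.not_mem_nil, or_false] at hx
      rcases hx with rfl | rfl
      · exact ⟨n + d, Nat.le_add_right n d, rfl⟩
      · exact ⟨n + d + 1, by omega, rfl⟩

/-- if `G'` is an induced subgraph of `G` (on the vertex set `A`)
with finite vertex-boundary and some end of `G'` contains rays of the end of
`r`, then all vertices dominating that end lie in `A`. -/
theorem dom_subset_of_finite_boundary (G : SimpleGraph V) (r : ℕ → V)
    (hr : IsRay G r) (A : Set V) (hb : (vBoundary G A).Finite)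
    (f : ℕ → A) (hf : IsRay (G.induce A) f)
    (hequiv : EquivRay G (fun n => (f n : V)) r) :
    Dom G r ⊆ A := by
  intro v hv
  by_contra hvA
  obtain ⟨g, p, hg, hpath, hdisj⟩ := hv
  set S₀ := vBoundary G A with hS₀def
  have hS₀A : S₀ ⊆ A := fun x hx => hx.1
  have hvS₀ : v ∉ S₀ := fun h => hvA (hS₀A h)
  -- bound on indices of the ray lying in the boundary
  have hI : {j | r j ∈ S₀}.Finite := hb.preimage hr.inj.injOn
  obtain ⟨N, hN⟩ := hI.bddAbove
  -- the finite separator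
  set S : Set V := (S₀ ∪ r '' Set.Iic N) \ {v} with hSdef
  have hSfin : S.Finite := ((hb.union ((Set.finite_Iic N).image r)).diff)
  have hvS : v ∉ S := fun h => h.2 rfl
  have hS₀S : S₀ ⊆ S := fun x hx => ⟨Or.inl hx, fun hxv => hvS₀ (hxv ▸ hx)⟩
  -- a walk from the ray f to r n avoiding S
  obtain ⟨m, n, hmn⟩ := hequiv S hSfin
  obtain ⟨w, hw⟩ := hmn
  -- r n is either v or beyond index N and outside S₀
  have hrnS : r n ∉ S := hw (r n) (SimpleGraph.Walk.end_mem_support w)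
  -- choose a dominating path avoiding S with index ≥ n
  have hBfin : {i : ℕ | ∃ s ∈ S, s ∈ (p i).support}.Finite := by
    have hsub : ∀ s ∈ S, {i : ℕ | s ∈ (p i).support}.Subsingleton := by
      intro s hs i hi j hj
      by_contra hne
      exact hvS ((hdisj i j hne s hi hj) ▸ hs)
    refine (hSfin.biUnion fun s hs => (hsub s hs).finite).subset ?_
    rintro i ⟨s, hs, hmem⟩
    exact Set.mem_biUnion hs hmem
  have hgfin : {i : ℕ | g i < n}.Finite :=
    (Set.finite_Iio n).preimage hg.injOn
  obtain ⟨i, hi⟩ := (Set.Finite.infinite_compl (hBfin.union hgfin)).nonempty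
  rw [Set.mem_compl_iff, Set.mem_union] at hi
  push_neg at hi
  obtain ⟨hiS, hin⟩ := hi
  rw [Set.mem_setOf_eq, not_lt] at hin
  have hpiS : ∀ x ∈ (p i).support, x ∉ S := by
    intro x hx hxS
    exact hiS ⟨x, hxS, hx⟩
  -- the fact that a walk from f m to v avoiding S₀ gives a contradiction
  have key : ∀ (W : G.Walk (f m : V) v), (∀ x ∈ W.support, x ∉ S₀) → False := by
    intro W hW
    obtain ⟨x, hx, hxb⟩ := walk_meets_vBoundary G A W (f m).2 hvA
    exact hW x hx hxb
  by_cases hrnv : r n = v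
  · refine key (hrnv ▸ w) ?_
    intro x hx hxS₀
    have hx' : x ∈ w.support := by
      revert hx
      cases hrnv
      exact id
    exact hw x hx' (hS₀S hxS₀)
  · -- n > N
    have hnN : N < n := by
      by_contra hle
      exact hrnS ⟨Or.inr ⟨n, Set.mem_Iic.mpr (by omega), rfl⟩, hrnv⟩
    obtain ⟨seg, hseg⟩ := ray_segment_s11 hr n (g i - n)
    have hgi : r (n + (g i - n)) = r (g i) := by congr 1; omega
    refine key (w.append ((seg.copy rfl hgi).append ((p i).reverse))) ?_
    intro x hx hxS₀
    have hxv : x ≠ v := fun h => hvS₀ (h ▸ hxS₀)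
    have hxS : x ∈ S := hS₀S hxS₀
    rw [SimpleGraph.Walk.mem_support_append_iff] at hx
    rcases hx with hx | hx
    · exact hw x hx hxS
    · rw [SimpleGraph.Walk.mem_support_append_iff] at hx
      rcases hx with hx | hx
      · rw [SimpleGraph.Walk.support_copy] at hx
        obtain ⟨j, hj, rfl⟩ := hseg x hx
        have hjN : j ≤ N := hN hxS₀
        omega
      · rw [SimpleGraph.Walk.support_reverse, List.mem_reverse] at hx
        exact hpiS x hx hxS

end Paper
end

section
/- Let G be a graph, ω an end of G with relative degree d_{e/v}(ω) > m (m rational) and |Dom(ω)| finite, and let S ⊆ V(G) be finite. Then G_ω = G − Dom(ω) has an ω̂-region Ĥ with V(Ĥ) ∩ S = ∅ and |∂_e Ĥ| / |∂_v Ĥ| > m − |Dom(ω)|. -/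
open scoped ENNReal

namespace Paper

variable {V : Type*} {W : Type*}

lemma walk_enter {G : SimpleGraph V} {A : Set V} :
    ∀ {u w : V} (p : G.Walk u w), u ∉ A → w ∈ A → ∃ x ∈ p.support, x ∈ vBoundary G A := by
  intro u w p
  induction p with
  | nil => intro hu hw; exact absurd hw hu
  | @cons u v w h q ih =>
    intro hu hw
    by_cases hv : v ∈ A
    · exact ⟨v, by simp [SimpleGraph.Walk.support_cons, q.start_mem_support],
        ⟨hv, u, hu, h.symm⟩⟩
    · obtain ⟨x, hx1, hx2⟩ := ih hv hw
      exact ⟨x, by simp [SimpleGraph.Walk.support_cons]; right; exact hx1, hx2⟩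

lemma walk_suffix {G : SimpleGraph V} :
    ∀ {u w : V} (p : G.Walk u w) (y : V), y ∈ p.support →
      ∃ q : G.Walk y w, ∀ x ∈ q.support, x ∈ p.support := by
  intro u w p
  induction p with
  | nil =>
    intro y hy
    simp only [SimpleGraph.Walk.support_nil, List.mem_singleton] at hy
    subst hy
    exact ⟨SimpleGraph.Walk.nil, by simp⟩
  | @cons u v w h q ih =>
    intro y hy
    rcases (by simpa [SimpleGraph.Walk.support_cons] using hy) with h1 | h2
    · subst h1; exact ⟨SimpleGraph.Walk.cons h q, fun x hx => hx⟩
    · obtain ⟨q', hq'⟩ := ih y h2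
      exact ⟨q', fun x hx => by simp [SimpleGraph.Walk.support_cons]; right; exact hq' x hx⟩

lemma walk_lastB {G : SimpleGraph V} {B : Set V} :
    ∀ {u w : V} (p : G.Walk u w), w ∉ B → (∃ x ∈ p.support, x ∈ B) →
      ∃ b ∈ B, ∃ q : G.Walk b w, (∀ x ∈ q.support, x ∈ p.support) ∧
        (∀ x ∈ q.support, x ∈ B → x = b) := by
  intro u w p
  induction p with
  | nil =>
    intro hw hx
    obtain ⟨x, hx1, hx2⟩ := hx
    simp [SimpleGraph.Walk.support_nil] at hx1
    subst hx1; exact absurd hx2 hw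
  | @cons u v w h q ih =>
    intro hw hx
    by_cases hq : ∃ x ∈ q.support, x ∈ B
    · obtain ⟨b, hb, q', h1, h2⟩ := ih hw hq
      exact ⟨b, hb, q', fun x hx => by simp [SimpleGraph.Walk.support_cons]; right; exact h1 x hx, h2⟩
    · obtain ⟨x, hx1, hx2⟩ := hx
      have hxu : x = u := by
        rcases (by simpa [SimpleGraph.Walk.support_cons] using hx1) with h1 | h2
        · exact h1
        · exact absurd ⟨x, h2, hx2⟩ hq
      subst hxu
      refine ⟨x, hx2, SimpleGraph.Walk.cons h q, fun z hz => hz, ?_⟩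
      intro z hz hzB
      rcases (by simpa [SimpleGraph.Walk.support_cons] using hz) with h1 | h2
      · exact h1
      · exact absurd ⟨z, h2, hzB⟩ hq

lemma walk_induce_reachable {G : SimpleGraph V} {A : Set V} :
    ∀ {u w : V} (p : G.Walk u w), (∀ x ∈ p.support, x ∈ A) → ∀ (hu : u ∈ A) (hw : w ∈ A),
      (G.induce A).Reachable ⟨u, hu⟩ ⟨w, hw⟩ := by
  intro u w p
  induction p with
  | nil => intro _ hu hw; rfl
  | @cons u v w h q ih =>
    intro hsup hu hw
    have hv : v ∈ A := hsup v (by simp [SimpleGraph.Walk.support_cons, q.start_mem_support])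
    have hadj : (G.induce A).Adj ⟨u, hu⟩ ⟨v, hv⟩ := by
      simp [SimpleGraph.comap_adj]; exact h
    exact hadj.reachable.trans (ih (fun x hx => hsup x (by simp [SimpleGraph.Walk.support_cons]; right; exact hx)) hv hw)

lemma ray_walk {G : SimpleGraph V} {f : ℕ → V} (hf : IsRay G f) (a : ℕ) :
    ∀ b, a ≤ b → ∃ q : G.Walk (f a) (f b), ∀ x ∈ q.support, ∃ k, a ≤ k ∧ k ≤ b ∧ x = f k := by
  intro b hb
  induction b, hb using Nat.le_induction with
  | base => exact ⟨SimpleGraph.Walk.nil, by simp; exact ⟨a, le_refl _, le_refl _, rfl⟩⟩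
  | succ b hb ih =>
    obtain ⟨q, hq⟩ := ih
    refine ⟨q.concat (hf.adj b), ?_⟩
    intro x hx
    rw [SimpleGraph.Walk.support_concat, List.mem_append] at hx
    rcases hx with hx | hx
    · obtain ⟨k, h1, h2, h3⟩ := hq x hx
      exact ⟨k, h1, h2.trans (Nat.le_succ b), h3⟩
    · simp at hx; exact ⟨b+1, hb.trans (Nat.le_succ b), le_refl _, hx⟩

section Greedy
variable {V : Type*} (G : SimpleGraph V) (v : V) (f : ℕ → V)

private def GHyp : Prop := ∀ X : Set V, X.Finite → v ∉ X → ∀ N : ℕ,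
  ∃ n, N ≤ n ∧ ∃ p : G.Walk v (f n), ∀ x ∈ p.support, x ∉ X

/-- State for the greedy construction of infinitely many disjoint `v`–ray paths. -/
private def GSt : Type _ := Σ' (S : Set V) (n : ℕ) (p : G.Walk v (f n)),
  S.Finite ∧ v ∉ S ∧ p.IsPath ∧ ∀ x ∈ p.support, x ∉ S

variable {G v f}

private noncomputable def gnext (hv : GHyp G v f) (st : GSt G v f) : GSt G v f :=
  letI : DecidableEq V := Classical.decEq V
  let S' : Set V := st.1 ∪ ({x | x ∈ st.2.2.1.support} \ {v})
  have hS' : S'.Finite := st.2.2.2.1.union ((st.2.2.1.support.finite_toSet).diff)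
  have hv' : v ∉ S' := fun hmem => by
    rcases hmem with h | h
    · exact st.2.2.2.2.1 h
    · exact h.2 rfl
  let hh := hv S' hS' hv' (st.2.1 + 1)
  ⟨S', hh.choose, hh.choose_spec.2.choose.bypass, hS', hv',
    SimpleGraph.Walk.bypass_isPath _,
    fun x hx => hh.choose_spec.2.choose_spec x (SimpleGraph.Walk.support_bypass_subset _ hx)⟩

private noncomputable def ginit (hv : GHyp G v f) : GSt G v f :=
  letI : DecidableEq V := Classical.decEq V
  let hh := hv ∅ Set.finite_empty (Set.notMem_empty v) 0
  ⟨∅, hh.choose, hh.choose_spec.2.choose.bypass, Set.finite_empty, Set.notMem_empty v,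
    SimpleGraph.Walk.bypass_isPath _,
    fun x hx => hh.choose_spec.2.choose_spec x (SimpleGraph.Walk.support_bypass_subset _ hx)⟩

private noncomputable def gseq (hv : GHyp G v f) : ℕ → GSt G v f := fun k =>
  Nat.rec (ginit hv) (fun _ st => gnext hv st) k

private lemma gseq_succ (hv : GHyp G v f) (k : ℕ) :
    gseq hv (k + 1) = gnext hv (gseq hv k) := rfl

private lemma gnext_lt (hv : GHyp G v f) (st : GSt G v f) : st.2.1 < (gnext hv st).2.1 := by
  have hS' : (st.1 ∪ ({x | x ∈ st.2.2.1.support} \ {v})).Finite :=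
    st.2.2.2.1.union ((st.2.2.1.support.finite_toSet).diff)
  have hv' : v ∉ st.1 ∪ ({x | x ∈ st.2.2.1.support} \ {v}) := fun hmem => by
    rcases hmem with h | h
    · exact st.2.2.2.2.1 h
    · exact h.2 rfl
  exact Nat.lt_of_succ_le (hv _ hS' hv' (st.2.1 + 1)).choose_spec.1

private lemma gnext_S (hv : GHyp G v f) (st : GSt G v f) :
    (gnext hv st).1 = st.1 ∪ ({x | x ∈ st.2.2.1.support} \ {v}) := rfl

private lemma gseq_S_mono (hv : GHyp G v f) : ∀ {i j : ℕ}, i ≤ j →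
    (gseq hv i).1 ⊆ (gseq hv j).1 := by
  intro i j hij
  induction j, hij using Nat.le_induction with
  | base => exact subset_rfl
  | succ j hj ih =>
    refine ih.trans ?_
    rw [gseq_succ, gnext_S]
    exact Set.subset_union_left

lemma dominates_of_no_finite_sep (hv : GHyp G v f) : DominatesRay G v f := by
  refine ⟨fun k => (gseq hv k).2.1, fun k => (gseq hv k).2.2.1, ?_, ?_, ?_⟩
  · have hmono : StrictMono (fun k => (gseq hv k).2.1) := by
      apply strictMono_nat_of_lt_succ
      intro k
      rw [gseq_succ]
      exact gnext_lt hv _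
    exact hmono.injective
  · intro k
    exact (gseq hv k).2.2.2.2.2.1
  · have key : ∀ i j, i < j → ∀ x ∈ ((gseq hv i).2.2.1).support,
        x ∈ ((gseq hv j).2.2.1).support → x = v := by
      intro i j hij x hxi hxj
      by_contra hxv
      have h1 : x ∈ (gseq hv (i+1)).1 := by
        rw [gseq_succ, gnext_S]
        exact Or.inr ⟨hxi, hxv⟩
      have h2 : x ∈ (gseq hv j).1 := gseq_S_mono hv hij h1
      exact ((gseq hv j).2.2.2.2.2.2 x hxj) h2
    intro a b hab x hxa hxb
    rcases hab.lt_or_gt with h | h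
    · exact key a b h x hxa hxb
    · exact key b a h x hxb hxa

end Greedy

section Tail
variable {V : Type*} (G : SimpleGraph V) (r : ℕ → V)

/-- The tail of `r` beyond `N₀`, as a ray in `G - Dom`. -/
def tailRay (N₀ : ℕ) (h0 : ∀ n, r (N₀ + n) ∉ Dom G r) : ℕ → ((Dom G r)ᶜ : Set V) :=
  fun n => ⟨r (N₀ + n), h0 n⟩

variable {G r}
variable {N₀ : ℕ} (h0 : ∀ n, r (N₀ + n) ∉ Dom G r)

lemma tailRay_isRay (hr : IsRay G r) : IsRay (Gmin G r) (tailRay G r N₀ h0) := by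
  constructor
  · intro a b hab
    have := congrArg Subtype.val hab
    simp only [tailRay] at this
    exact Nat.add_left_cancel (hr.inj this)
  · intro n
    show G.Adj (r (N₀ + n)) (r (N₀ + (n + 1)))
    have : N₀ + (n + 1) = (N₀ + n) + 1 := by omega
    rw [this]
    exact hr.adj (N₀ + n)

lemma exists_tail (hfin : (Dom G r).Finite) (hr : IsRay G r) :
    ∃ N₀ : ℕ, ∀ n, r (N₀ + n) ∉ Dom G r := by
  have hpre : (r ⁻¹' (Dom G r)).Finite :=
    hfin.preimage (Set.injOn_of_injective hr.inj)
  obtain ⟨N, hN⟩ := hpre.bddAbove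
  refine ⟨N + 1, fun n hmem => ?_⟩
  have := hN hmem
  omega

lemma tailRay_inDeletedEnd (hr : IsRay G r) (T : ℕ) :
    InDeletedEnd G r (fun k => tailRay G r N₀ h0 (T + k)) := by
  constructor
  · constructor
    · intro a b hab
      have := (tailRay_isRay h0 hr).inj hab
      omega
    · intro n
      have : T + (n + 1) = (T + n) + 1 := by omega
      rw [this]
      exact (tailRay_isRay h0 hr).adj (T + n)
  · intro Sf hSf
    have hpre : (r ⁻¹' Sf).Finite := hSf.preimage (Set.injOn_of_injective hr.inj)
    obtain ⟨N, hN⟩ := hpre.bddAbove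
    refine ⟨N + 1, N₀ + (T + (N + 1)), ?_⟩
    have hnot : r (N₀ + (T + (N + 1))) ∉ Sf := by
      intro hmem
      have := hN hmem
      omega
    exact ⟨SimpleGraph.Walk.nil, by
      intro x hx
      simp only [SimpleGraph.Walk.support_nil, List.mem_singleton] at hx
      replace hx : x ∈ [r (N₀ + (T + (N + 1)))] := hx
      rw [List.mem_singleton] at hx
      subst hx
      exact hnot⟩

lemma dominates_transfer {v : ((Dom G r)ᶜ : Set V)}
    (hd : DominatesRay (Gmin G r) v (tailRay G r N₀ h0)) : DominatesRay G (v : V) r := by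
  obtain ⟨g, p, hginj, hpath, hdisj⟩ := hd
  let emb : Gmin G r ↪g G := SimpleGraph.Embedding.induce _
  refine ⟨fun n => N₀ + g n, fun n => (p n).map emb.toHom, ?_, ?_, ?_⟩
  · intro a b hab
    have hab' : N₀ + g a = N₀ + g b := hab
    exact hginj (Nat.add_left_cancel hab')
  · intro n
    exact SimpleGraph.Walk.map_isPath_of_injective Subtype.val_injective (hpath n)
  · intro a b hab x hxa hxb
    dsimp only at hxa hxb
    replace hxa : x ∈ ((p a).map emb.toHom).support := hxa
    replace hxb : x ∈ ((p b).map emb.toHom).support := hxb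
    rw [SimpleGraph.Walk.support_map, List.mem_map] at hxa hxb
    obtain ⟨y, hy, hyx⟩ := hxa
    obtain ⟨z, hz, hzx⟩ := hxb
    have hyz : y = z := Subtype.val_injective (hyx.trans hzx.symm)
    subst hyz
    have := hdisj a b hab y hy hz
    rw [← hyx, this]
    rfl

lemma exists_sep (v : ((Dom G r)ᶜ : Set V)) :
    ∃ X : Set ((Dom G r)ᶜ : Set V), X.Finite ∧ v ∉ X ∧ ∃ N, ∀ n, N ≤ n →
      ∀ p : (Gmin G r).Walk v (tailRay G r N₀ h0 n), ∃ x ∈ p.support, x ∈ X := by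
  by_contra hcon
  push_neg at hcon
  have hv : GHyp (Gmin G r) v (tailRay G r N₀ h0) := by
    intro X hX hvX N
    obtain ⟨n, hn, p, hp⟩ := hcon X hX hvX N
    exact ⟨n, hn, p, hp⟩
  exact v.2 (dominates_transfer h0 (dominates_of_no_finite_sep hv))

end Tail

section Master
variable {V : Type*} (G : SimpleGraph V) (r : ℕ → V)

/-- Output data of the region construction around the tail ray, cutting off `B`. -/
structure RegOut {N₀ : ℕ} (h0 : ∀ n, r (N₀ + n) ∉ Dom G r)
    (B : Set ((Dom G r)ᶜ : Set V)) where
  A : Set ((Dom G r)ᶜ : Set V)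
  X : Set ((Dom G r)ᶜ : Set V)
  T : ℕ
  region : IsOmegaRegion G r A
  bd : vBoundary (Gmin G r) A = X
  xfin : X.Finite
  disjXB : ∀ x ∈ X, x ∉ B
  disjAB : ∀ a ∈ A, a ∉ B
  tail : ∀ m, T ≤ m → tailRay G r N₀ h0 m ∈ A
  walkto : ∀ u ∈ A, ∀ Nn : ℕ, ∃ n, Nn ≤ n ∧
    ∃ p : (Gmin G r).Walk u (tailRay G r N₀ h0 n), ∀ x ∈ p.support, x ∉ B
  minsep : B.Nonempty → MinSepVertsEndsIn (Gmin G r) B (X) (A)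
  xne : (∀ Nn : ℕ, ∃ b ∈ B, ∃ n, Nn ≤ n ∧
    Nonempty ((Gmin G r).Walk b (tailRay G r N₀ h0 n))) → X.Nonempty

variable {G r}

lemma master (hr : IsRay G r) {N₀ : ℕ} (h0 : ∀ n, r (N₀ + n) ∉ Dom G r)
    (B : Set ((Dom G r)ᶜ : Set V)) (hB : B.Finite) : Nonempty (RegOut G r h0 B) := by
  classical
  have hfray : IsRay (Gmin G r) (tailRay G r N₀ h0) := tailRay_isRay h0 hr
  set f := tailRay G r N₀ h0 with hfdef
  choose Xv hXvfin hvXv Nv hsep using fun v : ((Dom G r)ᶜ : Set V) => exists_sep h0 v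
  set X₀ : Set ((Dom G r)ᶜ : Set V) := (⋃ b ∈ B, Xv b) \ B with hX₀def
  have hX₀fin : X₀.Finite := (hB.biUnion (fun b _ => hXvfin b)).diff
  have hX₀B : ∀ x ∈ X₀, x ∉ B := fun x hx => hx.2
  obtain ⟨T₁, hT₁⟩ : ∃ T₁, ∀ b ∈ B, Nv b ≤ T₁ := by
    obtain ⟨T₁, hT₁⟩ := (hB.image Nv).bddAbove
    exact ⟨T₁, fun b hb => hT₁ (Set.mem_image_of_mem Nv hb)⟩
  obtain ⟨T₂, hT₂⟩ : ∃ T₂, ∀ m, T₂ ≤ m → f m ∉ X₀ ∪ B := by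
    have hpre : (f ⁻¹' (X₀ ∪ B)).Finite :=
      (hX₀fin.union hB).preimage (Set.injOn_of_injective hfray.inj)
    obtain ⟨T₂, hT₂⟩ := hpre.bddAbove
    exact ⟨T₂ + 1, fun m hm hmem => by have := hT₂ hmem; omega⟩
  set T := max T₁ T₂ with hTdef
  have hTa : ∀ b ∈ B, Nv b ≤ T := fun b hb => (hT₁ b hb).trans (le_max_left _ _)
  have hTb : ∀ m, T ≤ m → f m ∉ X₀ ∪ B := fun m hm => hT₂ m ((le_max_right _ _).trans hm)
  -- the X₀ separation property
  have hsepX₀ : ∀ b ∈ B, ∀ n, T ≤ n → ∀ p : (Gmin G r).Walk b (f n),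
      ∃ x ∈ p.support, x ∈ X₀ := by
    intro b hb n hn p
    by_contra hcon
    push_neg at hcon
    have hfnB : f n ∉ B := fun h => (hTb n hn) (Or.inr h)
    obtain ⟨b', hb', q, hsub, hqB⟩ := walk_lastB p hfnB ⟨b, p.start_mem_support, hb⟩
    obtain ⟨x, hxq, hxX⟩ := hsep b' n ((hTa b' hb').trans hn) q
    have hxp := hsub x hxq
    have hxX₀ : x ∉ X₀ := hcon x hxp
    have hxB : x ∈ B := by
      by_contra hxB
      exact hxX₀ ⟨Set.mem_biUnion hb' hxX, hxB⟩
    have hxb' := hqB x hxq hxB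
    subst hxb'
    exact hvXv x hxX
  -- choose a minimum-cardinality separator inside X₀
  have hPex : ∃ k, ∃ Y, Y ⊆ X₀ ∧ Y.ncard = k ∧ (∀ b ∈ B, ∀ n, T ≤ n →
      ∀ p : (Gmin G r).Walk b (f n), ∃ x ∈ p.support, x ∈ Y) :=
    ⟨X₀.ncard, X₀, subset_rfl, rfl, hsepX₀⟩
  obtain ⟨X, hXsub, hXcard, hXsep⟩ := Nat.find_spec hPex
  have hXmin : ∀ Y, Y ⊆ X₀ → (∀ b ∈ B, ∀ n, T ≤ n →
      ∀ p : (Gmin G r).Walk b (f n), ∃ x ∈ p.support, x ∈ Y) → Nat.find hPex ≤ Y.ncard := by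
    intro Y h1 h2
    by_contra hlt
    push_neg at hlt
    exact Nat.find_min hPex hlt ⟨Y, h1, rfl, h2⟩
  have hXfin : X.Finite := hX₀fin.subset hXsub
  have hXB : ∀ x ∈ X, x ∉ B := fun x hx => hX₀B x (hXsub hx)
  -- the region
  set C : Set ((Dom G r)ᶜ : Set V) :=
    {u | ∃ n, T ≤ n ∧ ∃ p : (Gmin G r).Walk u (f n), ∀ x ∈ p.support, x ∉ X} with hCdef
  set A : Set ((Dom G r)ᶜ : Set V) :=
    C ∪ {x | x ∈ X ∧ ∃ u ∈ C, (Gmin G r).Adj x u} with hAdef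
  have hfX : ∀ m, T ≤ m → f m ∉ X := fun m hm hmem => hTb m hm (Or.inl (hXsub hmem))
  have hCtail : ∀ m, T ≤ m → f m ∈ C := by
    intro m hm
    refine ⟨m, hm, SimpleGraph.Walk.nil, ?_⟩
    intro x hx
    simp only [SimpleGraph.Walk.support_nil, List.mem_singleton] at hx
    subst hx
    exact hfX m hm
  have hCsupp : ∀ u (n : ℕ) (p : (Gmin G r).Walk u (f n)), T ≤ n →
      (∀ x ∈ p.support, x ∉ X) → ∀ y ∈ p.support, y ∈ C := by
    intro u n p hn hp y hy
    obtain ⟨q, hq⟩ := walk_suffix p y hy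
    exact ⟨n, hn, q, fun x hx => hp x (hq x hx)⟩
  have hBC : ∀ b ∈ B, b ∉ C := by
    rintro b hb ⟨n, hn, p, hp⟩
    obtain ⟨x, hx, hxX⟩ := hXsep b hb n hn p
    exact hp x hx hxX
  have hAB : ∀ a ∈ A, a ∉ B := by
    rintro a (ha | ha) hB'
    · exact hBC a hB' ha
    · exact hXB a ha.1 hB'
  -- C-walks avoiding B, with arbitrarily far targets
  have hCwalkB : ∀ u ∈ C, ∀ Nn : ℕ, ∃ n, Nn ≤ n ∧ T ≤ n ∧
      ∃ p : (Gmin G r).Walk u (f n), (∀ x ∈ p.support, x ∉ B) ∧ (∀ x ∈ p.support, x ∉ X) := by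
    rintro u ⟨n₀, hn₀, p, hp⟩ Nn
    have hpB : ∀ x ∈ p.support, x ∉ B := by
      intro x hx hxB
      obtain ⟨q, hq⟩ := walk_suffix p x hx
      obtain ⟨z, hz, hzX⟩ := hXsep x hxB n₀ hn₀ q
      exact hp z (hq z hz) hzX
    set n := max Nn n₀ with hndef
    obtain ⟨q, hq⟩ := ray_walk hfray n₀ n (le_max_right _ _)
    have hqprop : ∀ x ∈ q.support, x ∉ X₀ ∪ B := by
      intro x hx
      obtain ⟨k, hk1, _, hk3⟩ := hq x hx
      subst hk3
      exact hTb k (hn₀.trans hk1)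
    refine ⟨n, le_max_left _ _, hn₀.trans (le_max_right _ _), p.append q, ?_, ?_⟩
    · intro x hx
      rcases (SimpleGraph.Walk.mem_support_append_iff _ _).mp hx with h | h
      · exact hpB x h
      · exact fun hxB => hqprop x h (Or.inr hxB)
    · intro x hx
      rcases (SimpleGraph.Walk.mem_support_append_iff _ _).mp hx with h | h
      · exact hp x h
      · exact fun hxX => hqprop x h (Or.inl (hXsub hxX))
  -- boundary is contained in X
  have hbdsub : vBoundary (Gmin G r) A ⊆ X := by
    rintro a ⟨ha, y, hy, hadj⟩
    rcases ha with haC | haat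
    · exfalso
      obtain ⟨n, hn, p, hp⟩ := id haC
      by_cases hyX : y ∈ X
      · exact hy (Or.inr ⟨hyX, a, haC, hadj.symm⟩)
      · refine hy (Or.inl ⟨n, hn, SimpleGraph.Walk.cons hadj.symm p, ?_⟩)
        intro x hx
        rcases (by simpa [SimpleGraph.Walk.support_cons] using hx) with h | h
        · subst h; exact hyX
        · exact hp x h
    · exact haat.1
  have hfTA : f T ∈ A := Or.inl (hCtail T le_rfl)
  -- the boundary is a separator, hence equals X by minimality
  have hsepbd : ∀ b ∈ B, ∀ n, T ≤ n → ∀ p : (Gmin G r).Walk b (f n),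
      ∃ x ∈ p.support, x ∈ vBoundary (Gmin G r) A := by
    intro b hb n hn p
    have hbA : b ∉ A := fun h => hAB b h hb
    exact walk_enter p hbA (Or.inl (hCtail n hn))
  have hbdeq : vBoundary (Gmin G r) A = X := by
    apply Set.eq_of_subset_of_ncard_le hbdsub ?_ hXfin
    rw [hXcard]
    exact hXmin _ (hbdsub.trans hXsub) hsepbd
  -- connectivity
  have hAwalk : ∀ a ∈ A, ∃ p : (Gmin G r).Walk a (f T), ∀ x ∈ p.support, x ∈ A := by
    have hC' : ∀ a ∈ C, ∃ p : (Gmin G r).Walk a (f T), ∀ x ∈ p.support, x ∈ A := by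
      rintro a ⟨n, hn, p, hp⟩
      obtain ⟨q, hq⟩ := ray_walk hfray T n hn
      refine ⟨p.append q.reverse, ?_⟩
      intro x hx
      rcases (SimpleGraph.Walk.mem_support_append_iff _ _).mp hx with h | h
      · exact Or.inl (hCsupp a n p hn hp x h)
      · rw [SimpleGraph.Walk.support_reverse, List.mem_reverse] at h
        obtain ⟨k, hk1, _, hk3⟩ := hq x h
        subst hk3
        exact Or.inl (hCtail k hk1)
    rintro a (ha | ha)
    · exact hC' a ha
    · obtain ⟨hx, u, hu, hadj⟩ := ha
      obtain ⟨p, hp⟩ := hC' u hu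
      refine ⟨SimpleGraph.Walk.cons hadj p, ?_⟩
      intro x hxs
      rcases (by simpa [SimpleGraph.Walk.support_cons] using hxs) with h | h
      · subst h; exact Or.inr ⟨hx, u, hu, hadj⟩
      · exact hp x h
  have hconn : ((Gmin G r).induce A).Connected := by
    rw [SimpleGraph.connected_iff]
    constructor
    · intro x y
      obtain ⟨p, hp⟩ := hAwalk x.1 x.2
      obtain ⟨q, hq⟩ := hAwalk y.1 y.2
      exact (walk_induce_reachable p hp x.2 hfTA).trans (walk_induce_reachable q hq y.2 hfTA).symm
    · exact ⟨⟨f T, hfTA⟩⟩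
  -- assemble
  refine ⟨⟨A, X, T, ?_, hbdeq, hXfin, hXB, hAB, fun m hm => Or.inl (hCtail m hm), ?_, ?_, ?_⟩⟩
  · refine ⟨hconn, ?_, ⟨fun k => f (T + k), tailRay_inDeletedEnd h0 hr T, ?_⟩⟩
    · rw [hbdeq]; exact hXfin
    · rintro x ⟨k, rfl⟩
      exact Or.inl (hCtail (T + k) (Nat.le_add_right _ _))
  · -- walkto
    rintro u (hu | hu) Nn
    · obtain ⟨n, hn1, _, p, hpB, _⟩ := hCwalkB u hu Nn
      exact ⟨n, hn1, p, hpB⟩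
    · obtain ⟨hx, u', hu', hadj⟩ := hu
      obtain ⟨n, hn1, _, p, hpB, _⟩ := hCwalkB u' hu' Nn
      refine ⟨n, hn1, SimpleGraph.Walk.cons hadj p, ?_⟩
      intro x hxs
      simp only [SimpleGraph.Walk.support_cons, List.mem_cons] at hxs
      rcases hxs with h | h
      · subst h; exact hXB _ hx
      · exact hpB x h
  · -- minsep
    intro hBne
    constructor
    · constructor
      · intro hsub
        obtain ⟨b, hb⟩ := hBne
        exact hXB b (hsub hb) hb
      · intro v hv f' hf' hrange n htail hreach
        obtain ⟨p, hp⟩ := hreach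
        have hvA : v ∉ A := fun h => hAB v h hv
        obtain ⟨x, hx, hxbd⟩ := walk_enter p hvA (hrange (Set.mem_range_self n))
        rw [hbdeq] at hxbd
        exact hp x hx hxbd
    · intro S' hS' hsepS'
      obtain ⟨_, hsepS'2⟩ := hsepS'
      have hcard : S'.ncard < X.ncard := Set.ncard_lt_ncard hS' hXfin
      have hnosep : ¬ (∀ b ∈ B, ∀ n, T ≤ n → ∀ p : (Gmin G r).Walk b (f n),
          ∃ x ∈ p.support, x ∈ S') := by
        intro hprop
        have := hXmin S' (hS'.subset.trans hXsub) hprop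
        omega
      push_neg at hnosep
      obtain ⟨b, hb, n, hn, p, hp⟩ := hnosep
      have hS'X₀ : S' ⊆ X₀ := hS'.subset.trans hXsub
      have htail' : ∀ m, n - T ≤ m → f (T + m) ∉ S' := by
        intro m _ hmem
        exact hTb (T + m) (Nat.le_add_right _ _) (Or.inl (hS'X₀ hmem))
      have he : f n = f (T + (n - T)) := by rw [Nat.add_sub_cancel' hn]
      refine hsepS'2 b hb (fun k => f (T + k)) (tailRay_inDeletedEnd h0 hr T).1 ?_ (n - T)
        (fun m hm => htail' m hm) ?_
      · rintro x ⟨k, rfl⟩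
        exact Or.inl (hCtail (T + k) (Nat.le_add_right _ _))
      · refine ⟨p.copy rfl he, ?_⟩
        intro x hx
        rw [SimpleGraph.Walk.support_copy] at hx
        exact fun hmem => hp x hx hmem
  · -- xne
    intro hwalks
    obtain ⟨b, hb, n, hn, ⟨p⟩⟩ := hwalks T
    obtain ⟨x, _, hxX⟩ := hXsep b hb n hn p
    exact ⟨x, hxX⟩

end Master

section Seq
variable {V : Type*}

private noncomputable def cseq (G : SimpleGraph V) (r : ℕ → V) (hr : IsRay G r) {N₀ : ℕ}
    (h0 : ∀ n, r (N₀ + n) ∉ Dom G r) (B₀ : Set ((Dom G r)ᶜ : Set V)) (hB₀ : B₀.Finite) :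
    ℕ → Σ' (B : Set ((Dom G r)ᶜ : Set V)) (_ : B.Finite), RegOut G r h0 B :=
  fun k => Nat.rec ⟨B₀, hB₀, (master hr h0 B₀ hB₀).some⟩
    (fun _ st => ⟨st.2.2.X, st.2.2.xfin, (master hr h0 st.2.2.X st.2.2.xfin).some⟩) k

variable {G : SimpleGraph V} {r : ℕ → V} (hr : IsRay G r) {N₀ : ℕ}
  (h0 : ∀ n, r (N₀ + n) ∉ Dom G r) (B₀ : Set ((Dom G r)ᶜ : Set V)) (hB₀ : B₀.Finite)

private lemma cseq_subset (i : ℕ) :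
    ∀ u ∈ ((cseq G r hr h0 B₀ hB₀ (i+1)).2.2).A,
      u ∈ ((cseq G r hr h0 B₀ hB₀ i).2.2).A \
        vBoundary (Gmin G r) ((cseq G r hr h0 B₀ hB₀ i).2.2).A := by
  intro u hu
  set Ri := (cseq G r hr h0 B₀ hB₀ i).2.2
  set Rj := (cseq G r hr h0 B₀ hB₀ (i+1)).2.2
  have hwalk := Rj.walkto u hu Ri.T
  obtain ⟨n, hn, p, hp⟩ := hwalk
  have hpX : ∀ x ∈ p.support, x ∉ Ri.X := hp
  have hfn : tailRay G r N₀ h0 n ∈ Ri.A := Ri.tail n hn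
  have huX : u ∉ vBoundary (Gmin G r) Ri.A := by
    rw [Ri.bd]
    exact hpX u p.start_mem_support
  have huA : u ∈ Ri.A := by
    by_contra hcon
    obtain ⟨x, hx, hxbd⟩ := walk_enter p hcon hfn
    rw [Ri.bd] at hxbd
    exact hpX x hx hxbd
  exact ⟨huA, huX⟩

private lemma cseq_xne
    (hseed : ∀ Nn : ℕ, ∃ b ∈ B₀, ∃ n, Nn ≤ n ∧
      Nonempty ((Gmin G r).Walk b (tailRay G r N₀ h0 n))) (i : ℕ) :
    ((cseq G r hr h0 B₀ hB₀ i).2.2).X.Nonempty := by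
  induction i with
  | zero => exact ((cseq G r hr h0 B₀ hB₀ 0).2.2).xne hseed
  | succ i ih =>
    apply ((cseq G r hr h0 B₀ hB₀ (i+1)).2.2).xne
    intro Nn
    obtain ⟨b, hb⟩ := ih
    have hbA : b ∈ ((cseq G r hr h0 B₀ hB₀ i).2.2).A := by
      have := ((cseq G r hr h0 B₀ hB₀ i).2.2).bd
      rw [← this] at hb
      exact hb.1
    obtain ⟨n, hn, p, _⟩ := ((cseq G r hr h0 B₀ hB₀ i).2.2).walkto b hbA Nn
    exact ⟨b, hb, n, hn, ⟨p⟩⟩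

private lemma cseq_anti : ∀ {i j : ℕ}, i ≤ j →
    ((cseq G r hr h0 B₀ hB₀ j).2.2).A ⊆ ((cseq G r hr h0 B₀ hB₀ i).2.2).A := by
  intro i j hij
  induction j, hij using Nat.le_induction with
  | base => exact subset_rfl
  | succ j hj ih =>
    intro u hu
    exact ih (cseq_subset hr h0 B₀ hB₀ j u hu).1

lemma cseq_converges
    (hseed : ∀ Nn : ℕ, ∃ b ∈ B₀, ∃ n, Nn ≤ n ∧
      Nonempty ((Gmin G r).Walk b (tailRay G r N₀ h0 n))) :
    Converges G r (fun i => ((cseq G r hr h0 B₀ hB₀ i).2.2).A) := by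
  refine ⟨?_, fun i => ((cseq G r hr h0 B₀ hB₀ i).2.2).region,
    fun i => fun u hu => cseq_subset hr h0 B₀ hB₀ i u hu, ?_⟩
  · -- injectivity
    have key : ∀ i j, i < j →
        ((cseq G r hr h0 B₀ hB₀ i).2.2).A ≠ ((cseq G r hr h0 B₀ hB₀ j).2.2).A := by
      intro i j hij heq
      obtain ⟨x, hx⟩ := cseq_xne hr h0 B₀ hB₀ hseed i
      have hxA : x ∈ ((cseq G r hr h0 B₀ hB₀ i).2.2).A := by
        have := ((cseq G r hr h0 B₀ hB₀ i).2.2).bd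
        rw [← this] at hx
        exact hx.1
      have hxbd : x ∈ vBoundary (Gmin G r) ((cseq G r hr h0 B₀ hB₀ i).2.2).A := by
        rw [((cseq G r hr h0 B₀ hB₀ i).2.2).bd]
        exact hx
      have hxj : x ∈ ((cseq G r hr h0 B₀ hB₀ j).2.2).A := heq ▸ hxA
      have hxj' : x ∈ ((cseq G r hr h0 B₀ hB₀ (i+1)).2.2).A := cseq_anti hr h0 B₀ hB₀ hij hxj
      exact (cseq_subset hr h0 B₀ hB₀ i x hxj').2 hxbd
    intro i j hij
    by_contra hne
    rcases Ne.lt_or_gt hne with h | h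
    · exact key i j h hij
    · exact key j i h hij.symm
  · -- minimal separators
    intro i
    rw [((cseq G r hr h0 B₀ hB₀ i).2.2).bd, ((cseq G r hr h0 B₀ hB₀ (i+1)).2.2).bd]
    exact ((cseq G r hr h0 B₀ hB₀ (i+1)).2.2).minsep (cseq_xne hr h0 B₀ hB₀ hseed i)

end Seq

set_option maxHeartbeats 1000000 in
/-- if the end of `r` has relative degree `> m` and finitely many
dominating vertices, then for every finite `S ⊆ V(G)` the graph `G_ω` has an
`ω̂`-region `Ĥ` avoiding `S` with `|∂_e Ĥ| / |∂_v Ĥ| > m - |Dom(ω)|`. -/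
theorem cutoff_region (G : SimpleGraph V) (r : ℕ → V) (hr : IsRay G r) (m : ℚ)
    (hfin : (Dom G r).Finite)
    (hdeg : ((m : ℝ) : EReal) < (relDegree G r : EReal))
    (S : Set V) (hS : S.Finite) :
    ∃ A : Set ((Dom G r)ᶜ : Set V), IsOmegaRegion G r A ∧
      (∀ x ∈ A, (x : V) ∉ S) ∧
      ((((m : ℝ) - (Dom G r).ncard) : ℝ) : EReal) <
        (bratio (Gmin G r) A : EReal) := by
  classical
  obtain ⟨N₀, h0⟩ := exists_tail hfin hr
  set f : ℕ → ((Dom G r)ᶜ : Set V) := tailRay G r N₀ h0 with hfdef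
  set S' : Set ((Dom G r)ᶜ : Set V) := Subtype.val ⁻¹' S with hS'def
  have hS'fin : S'.Finite := hS.preimage (Set.injOn_of_injective Subtype.val_injective)
  set B₀ : Set ((Dom G r)ᶜ : Set V) := S' ∪ {f 0} with hB₀def
  have hB₀ : B₀.Finite := hS'fin.union (Set.finite_singleton _)
  have hseed : ∀ Nn : ℕ, ∃ b ∈ B₀, ∃ n, Nn ≤ n ∧
      Nonempty ((Gmin G r).Walk b (tailRay G r N₀ h0 n)) := by
    intro Nn
    obtain ⟨q, _⟩ := ray_walk (tailRay_isRay h0 hr) 0 Nn (Nat.zero_le _)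
    exact ⟨f 0, Or.inr rfl, Nn, le_rfl, ⟨q⟩⟩
  obtain ⟨Aseq, hconv, hregion, havoid⟩ :
      ∃ Aseq : ℕ → Set ((Dom G r)ᶜ : Set V), Converges G r Aseq ∧
        (∀ i, IsOmegaRegion G r (Aseq i)) ∧ (∀ i, ∀ x ∈ Aseq i, (x : V) ∉ S) := by
    refine ⟨fun i => ((cseq G r hr h0 B₀ hB₀ i).2.2).A,
      cseq_converges hr h0 B₀ hB₀ hseed,
      fun i => ((cseq G r hr h0 B₀ hB₀ i).2.2).region, ?_⟩
    intro i x hx hxS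
    have hx0 : x ∈ ((cseq G r hr h0 B₀ hB₀ 0).2.2).A :=
      cseq_anti hr h0 B₀ hB₀ (Nat.zero_le i) hx
    exact ((cseq G r hr h0 B₀ hB₀ 0).2.2).disjAB x hx0 (Or.inl hxS)
  -- rewrite the relative degree
  have hcond : ¬ ((Dom G r).Infinite ∨ ¬ ∃ fd, InDeletedEnd G r fd) := by
    push_neg
    exact ⟨hfin, ⟨fun k => f (0 + k), tailRay_inDeletedEnd h0 hr 0⟩⟩
  rw [relDegree, if_neg hcond] at hdeg
  set I : ℝ≥0∞ := ⨅ A : {A : ℕ → Set ((Dom G r)ᶜ : Set V) // Converges G r A},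
      Filter.atTop.liminf fun i => bratio (Gmin G r) (A.1 i) with hIdef
  set D : ℕ := (Dom G r).ncard with hDdef
  have hDkey : ((Dom G r).encard : ℝ≥0∞) = (D : ℝ≥0∞) := by
    rw [hfin.encard_eq_coe_toFinset_card, hDdef, Set.ncard_eq_toFinset_card _ hfin]
    simp
  rcases lt_or_ge (m : ℝ) (D : ℝ) with hmD | hmD
  · -- m - D < 0 : any region works
    refine ⟨Aseq 0, hregion 0, havoid 0, ?_⟩
    have h1 : (((m : ℝ) - (D:ℕ) : ℝ) : EReal) < 0 := by
      rw [show ((0:EReal)) = (((0:ℝ)):EReal) from rfl, EReal.coe_lt_coe_iff]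
      linarith
    exact h1.trans_le (EReal.coe_ennreal_nonneg _)
  · -- main case
    set c' : ℝ≥0∞ := ENNReal.ofReal ((m : ℝ) - D) with hc'def
    have hkey : c' < Filter.atTop.liminf (fun i => bratio (Gmin G r) (Aseq i)) := by
      by_contra hcon
      push_neg at hcon
      have h1 : I ≤ Filter.atTop.liminf (fun i => bratio (Gmin G r) (Aseq i)) := by
        rw [hIdef]
        exact iInf_le _ (⟨Aseq, hconv⟩ :
          {A : ℕ → Set ((Dom G r)ᶜ : Set V) // Converges G r A})
      have hinf : I ≤ c' := h1.trans hcon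
      have hsum : (D : ℝ≥0∞) + c' = ENNReal.ofReal (m : ℝ) := by
        rw [hc'def, ← ENNReal.ofReal_natCast D,
          ← ENNReal.ofReal_add (by positivity) (by linarith)]
        congr 1
        ring
      have hle : ((Dom G r).encard : ℝ≥0∞) + I ≤ ENNReal.ofReal (m : ℝ) := by
        rw [hDkey, ← hsum]
        exact add_le_add_right hinf _
      have hlt := hdeg.trans_le (EReal.coe_ennreal_le_coe_ennreal_iff.mpr hle)
      rw [EReal.coe_ennreal_ofReal, max_eq_left (le_trans (Nat.cast_nonneg D) hmD)] at hlt
      exact lt_irrefl _ hlt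
    have heg := Filter.eventually_lt_of_lt_liminf hkey
    obtain ⟨i, hi⟩ := heg.exists
    refine ⟨Aseq i, hregion i, havoid i, ?_⟩
    have h2 : (((m : ℝ) - (D:ℕ) : ℝ) : EReal) = ((c' : ℝ≥0∞) : EReal) := by
      rw [hc'def, EReal.coe_ennreal_ofReal, max_eq_left (by linarith)]
    rw [h2]
    exact EReal.coe_ennreal_lt_coe_ennreal_iff.mpr hi

end Paper
end
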